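/- arXiv:1602.03073 — 2 statements merged into one kernel-verified Lean document; each statement's English description precedes it below -/
import Mathlib

section
/- Fix u ∈ ℝ, constants C₀ > 0, A₁ > 0, κ > 0, ṽ > 0 and an exponent p ≥ 1. Suppose that for every v' ≥ ṽ with 1 ≤ p ≤ A₁ (n v')^κ one has max_{1 ≤ j,k ≤ n} E|R_{jk}(u + i v')|^p ≤ C₀^p and E|u + i v' + m_n(u + i v')|^{−p} ≤ C₀^p. Then for every s₀ ≥ 1 and every v ≥ ṽ/s₀ with 1 ≤ p ≤ A₁ (n s₀ v)^κ one has max_{1 ≤ j,k ≤ n} E|R_{jk}(u + i v)|^p ≤ 2^p (1 + s₀)^p C₀^p and E|u + i v + m_n(u + i v)|^{−p} ≤ s₀^p C₀^p. -/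
open MeasureTheory ProbabilityTheory

/-- The resolvent `R(z) = (B - z I)⁻¹` of a real matrix `B`, viewed over `ℂ`. -/
noncomputable def resolv {n : ℕ} (B : Matrix (Fin n) (Fin n) ℝ) (z : ℂ) :
    Matrix (Fin n) (Fin n) ℂ :=
  (B.map (fun x => (x : ℂ)) - z • (1 : Matrix (Fin n) (Fin n) ℂ))⁻¹

/-- The Stieltjes transform `m_n(z) = n⁻¹ Tr R(z)`. -/
noncomputable def mSt {n : ℕ} (B : Matrix (Fin n) (Fin n) ℝ) (z : ℂ) : ℂ :=
  (n : ℂ)⁻¹ * (resolv B z).trace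

open Matrix in
lemma resolv_repr {n : ℕ} (B : Matrix (Fin n) (Fin n) ℝ) (hB : B.IsSymm) :
    ∃ (U : Matrix (Fin n) (Fin n) ℂ) (lam : Fin n → ℝ),
      (∀ j, ∑ α, Complex.normSq (U j α) = 1) ∧
      (∀ α, ∑ j, Complex.normSq (U j α) = 1) ∧
      (∀ z : ℂ, z.im ≠ 0 → ∀ j k, resolv B z j k
          = ∑ α, U j α * (starRingEnd ℂ) (U k α) * (((lam α : ℂ)) - z)⁻¹) := by
  set A : Matrix (Fin n) (Fin n) ℂ := B.map (fun x => (x : ℂ)) with hAdef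
  have hA : A.IsHermitian := by
    ext i j
    have : B j i = B i j := by
      have := congrFun (congrFun hB.eq i) j
      simpa [Matrix.transpose_apply] using this
    simp [conjTranspose_apply, hAdef, map_apply, Complex.conj_ofReal, this]
  have hUU : (hA.eigenvectorUnitary : Matrix (Fin n) (Fin n) ℂ) *
      (hA.eigenvectorUnitary : Matrix (Fin n) (Fin n) ℂ)ᴴ = 1 := by
    rw [← Matrix.star_eq_conjTranspose]
    exact hA.eigenvectorUnitary.2.2
  have hUU' : (hA.eigenvectorUnitary : Matrix (Fin n) (Fin n) ℂ)ᴴ *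
      (hA.eigenvectorUnitary : Matrix (Fin n) (Fin n) ℂ) = 1 := by
    rw [← Matrix.star_eq_conjTranspose]
    exact hA.eigenvectorUnitary.2.1
  refine ⟨hA.eigenvectorUnitary, hA.eigenvalues, ?_, ?_, ?_⟩
  · intro j
    have h1 : ((hA.eigenvectorUnitary : Matrix (Fin n) (Fin n) ℂ) *
        (hA.eigenvectorUnitary : Matrix (Fin n) (Fin n) ℂ)ᴴ) j j = 1 := by
      rw [hUU]; simp
    rw [Matrix.mul_apply] at h1
    have : ∀ α, (hA.eigenvectorUnitary : Matrix (Fin n) (Fin n) ℂ) j α *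
        (hA.eigenvectorUnitary : Matrix (Fin n) (Fin n) ℂ)ᴴ α j
        = (Complex.normSq ((hA.eigenvectorUnitary : Matrix (Fin n) (Fin n) ℂ) j α) : ℂ) := by
      intro α
      rw [Matrix.conjTranspose_apply, Complex.normSq_eq_conj_mul_self, Complex.star_def]
      ring
    rw [Finset.sum_congr rfl (fun α _ => this α)] at h1
    exact_mod_cast h1
  · intro α
    have h1 : ((hA.eigenvectorUnitary : Matrix (Fin n) (Fin n) ℂ)ᴴ *
        (hA.eigenvectorUnitary : Matrix (Fin n) (Fin n) ℂ)) α α = 1 := by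
      rw [hUU']; simp
    rw [Matrix.mul_apply] at h1
    have : ∀ j, (hA.eigenvectorUnitary : Matrix (Fin n) (Fin n) ℂ)ᴴ α j *
        (hA.eigenvectorUnitary : Matrix (Fin n) (Fin n) ℂ) j α
        = (Complex.normSq ((hA.eigenvectorUnitary : Matrix (Fin n) (Fin n) ℂ) j α) : ℂ) := by
      intro j
      rw [Matrix.conjTranspose_apply, Complex.normSq_eq_conj_mul_self, Complex.star_def]
    rw [Finset.sum_congr rfl (fun j _ => this j)] at h1
    exact_mod_cast h1
  · intro z hz j k
    set U : Matrix (Fin n) (Fin n) ℂ := (hA.eigenvectorUnitary : Matrix (Fin n) (Fin n) ℂ) with hU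
    set lam := hA.eigenvalues with hlam
    set d : Fin n → ℂ := fun α => (lam α : ℂ) - z with hd
    have hdne : ∀ α, d α ≠ 0 := by
      intro α h
      apply hz
      have h2 := congrArg Complex.im h
      simp only [hd] at h2
      simpa using h2
    have hM : A - z • (1 : Matrix (Fin n) (Fin n) ℂ) = U * Matrix.diagonal d * Uᴴ := by
      have hs := hA.spectral_theorem
      rw [Unitary.conjStarAlgAut_apply, Matrix.star_eq_conjTranspose] at hs
      rw [← hU, ← hlam] at hs
      have hz1 : z • (1 : Matrix (Fin n) (Fin n) ℂ) = U * (z • (1 : Matrix (Fin n) (Fin n) ℂ)) * Uᴴ := by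
        rw [Matrix.mul_smul, Matrix.mul_one, Matrix.smul_mul, hUU]
      rw [hz1]
      calc A - U * (z • 1) * Uᴴ
          = U * Matrix.diagonal (RCLike.ofReal ∘ lam) * Uᴴ - U * (z • 1) * Uᴴ := by
            conv_lhs => rw [hs]
        _ = U * (Matrix.diagonal (RCLike.ofReal ∘ lam) - z • 1) * Uᴴ := by
            rw [Matrix.mul_sub, Matrix.sub_mul]
        _ = U * Matrix.diagonal d * Uᴴ := by
            congr 1
            congr 1
            rw [Matrix.smul_one_eq_diagonal, ← Matrix.diagonal_sub]
            rfl
    have hinv : resolv B z = U * Matrix.diagonal (fun α => (d α)⁻¹) * Uᴴ := by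
      unfold resolv
      rw [← hAdef, hM]
      apply Matrix.inv_eq_right_inv
      calc U * Matrix.diagonal d * Uᴴ * (U * Matrix.diagonal (fun α => (d α)⁻¹) * Uᴴ)
          = U * Matrix.diagonal d * (Uᴴ * U) * Matrix.diagonal (fun α => (d α)⁻¹) * Uᴴ := by
            simp only [Matrix.mul_assoc]
        _ = U * (Matrix.diagonal d * Matrix.diagonal (fun α => (d α)⁻¹)) * Uᴴ := by
            rw [hUU', Matrix.mul_one]
            simp only [Matrix.mul_assoc]
        _ = 1 := by
            rw [Matrix.diagonal_mul_diagonal]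
            have : (fun α => d α * (d α)⁻¹) = fun _ => (1:ℂ) := by
              funext α; exact mul_inv_cancel₀ (hdne α)
            rw [this, Matrix.diagonal_one, Matrix.mul_one, hUU]
    rw [hinv, Matrix.mul_apply]
    apply Finset.sum_congr rfl
    intro α _
    rw [Matrix.mul_diagonal, Matrix.conjTranspose_apply, Complex.star_def]
    simp only [hd]
    ring

lemma normSq_sub_uv (a u v : ℝ) :
    Complex.normSq ((a:ℂ) - ((u:ℂ) + (v:ℂ) * Complex.I)) = (a-u)^2 + v^2 := by
  simp [Complex.normSq_apply, Complex.sub_re, Complex.sub_im, Complex.add_re, Complex.add_im,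
    Complex.mul_re, Complex.mul_im, Complex.I_re, Complex.I_im, Complex.ofReal_re,
    Complex.ofReal_im]
  ring

lemma v_le_abs_sub (a u v : ℝ) (hv : 0 ≤ v) :
    v ≤ Norm.norm ((a:ℂ) - ((u:ℂ) + (v:ℂ) * Complex.I)) := by
  have h1 := Complex.sq_norm ((a:ℂ) - ((u:ℂ) + (v:ℂ) * Complex.I))
  have h2 := normSq_sub_uv a u v
  have h3 := norm_nonneg ((a:ℂ) - ((u:ℂ) + (v:ℂ) * Complex.I))
  nlinarith [sq_nonneg (a-u), sq_nonneg (Norm.norm ((a:ℂ) - ((u:ℂ) + (v:ℂ) * Complex.I)) - v)]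

lemma abs_sub_mono (a u : ℝ) {v v' : ℝ} (h : v ≤ v') (h0 : 0 ≤ v) :
    Norm.norm ((a:ℂ) - ((u:ℂ) + (v:ℂ) * Complex.I))
      ≤ Norm.norm ((a:ℂ) - ((u:ℂ) + (v':ℂ) * Complex.I)) := by
  rw [Complex.norm_def, Complex.norm_def, normSq_sub_uv, normSq_sub_uv]
  apply Real.sqrt_le_sqrt
  nlinarith

lemma abs_sub_scale (a u : ℝ) {v v' s₀ : ℝ} (hv : 0 < v) (hs : 1 ≤ s₀) (hv' : v' = s₀ * v) :
    Norm.norm ((a:ℂ) - ((u:ℂ) + (v':ℂ) * Complex.I))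
      ≤ s₀ * Norm.norm ((a:ℂ) - ((u:ℂ) + (v:ℂ) * Complex.I)) := by
  rw [Complex.norm_def, Complex.norm_def, normSq_sub_uv, normSq_sub_uv]
  have h0 : (0:ℝ) ≤ s₀ := by linarith
  have : s₀ * Real.sqrt ((a-u)^2 + v^2) = Real.sqrt (s₀^2 * ((a-u)^2+v^2)) := by
    rw [Real.sqrt_mul (by positivity), Real.sqrt_sq h0]
  rw [this]
  apply Real.sqrt_le_sqrt
  subst hv'
  nlinarith [mul_nonneg (by nlinarith : (0:ℝ) ≤ s₀^2 - 1) (sq_nonneg (a-u))]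

lemma inv_im_sub (a u v : ℝ) :
    (((a:ℂ) - ((u:ℂ) + (v:ℂ) * Complex.I))⁻¹).im
      = v / Complex.normSq ((a:ℂ) - ((u:ℂ) + (v:ℂ) * Complex.I)) := by
  rw [Complex.inv_im]
  have : ((a:ℂ) - ((u:ℂ) + (v:ℂ) * Complex.I)).im = -v := by simp
  rw [this]
  ring_nf

lemma abs_sub_pos' (a u v : ℝ) (hv : 0 < v) :
    (a:ℂ) - ((u:ℂ) + (v:ℂ) * Complex.I) ≠ 0 := by
  intro h
  have := v_le_abs_sub a u v hv.le
  rw [h] at this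
  simp at this
  linarith

lemma im_uv (u v : ℝ) : ((u:ℂ) + (v:ℂ) * Complex.I).im = v := by simp

lemma abs_mul_abs_le (a b : ℂ) :
    Norm.norm a * Norm.norm b ≤ (Complex.normSq a + Complex.normSq b) / 2 := by
  nlinarith [sq_nonneg (Norm.norm a - Norm.norm b), Complex.sq_norm a, Complex.sq_norm b,
    norm_nonneg a, norm_nonneg b]

lemma det_entry_trivial {n : ℕ} (B : Matrix (Fin n) (Fin n) ℝ) (hB : B.IsSymm)
    (u v : ℝ) (hv : 0 < v) (j k : Fin n) :
    Norm.norm (resolv B ((u:ℂ) + (v:ℂ) * Complex.I) j k) ≤ 1 / v := by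
  obtain ⟨U, lam, hrow, hcol, hrep⟩ := resolv_repr B hB
  have hz : ((u:ℂ) + (v:ℂ) * Complex.I).im ≠ 0 := by rw [im_uv]; exact hv.ne'
  rw [hrep _ hz j k]
  set z : ℂ := (u:ℂ) + (v:ℂ) * Complex.I with hzdef
  have step1 := norm_sum_le Finset.univ
    (fun α => U j α * (starRingEnd ℂ) (U k α) * ((lam α : ℂ) - z)⁻¹)
  refine le_trans step1 ?_
  have step2 : ∀ α : Fin n, Norm.norm (U j α * (starRingEnd ℂ) (U k α) * ((lam α : ℂ) - z)⁻¹)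
      ≤ (Complex.normSq (U j α) + Complex.normSq (U k α)) / 2 * (1 / v) := by
    intro α
    rw [norm_mul, norm_mul, norm_inv, Complex.norm_conj]
    have h1 : Norm.norm ((lam α : ℂ) - z) ≥ v := v_le_abs_sub (lam α) u v hv.le
    have h2 : (Norm.norm ((lam α : ℂ) - z))⁻¹ ≤ 1 / v := by
      rw [one_div]
      exact inv_anti₀ hv h1
    have h3 := abs_mul_abs_le (U j α) (U k α)
    have h4 : (0:ℝ) ≤ Norm.norm (U j α) * Norm.norm (U k α) := by positivity
    have h5 : (0:ℝ) ≤ (Norm.norm ((lam α : ℂ) - z))⁻¹ := by positivity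
    calc Norm.norm (U j α) * Norm.norm (U k α) * (Norm.norm ((lam α : ℂ) - z))⁻¹
        ≤ Norm.norm (U j α) * Norm.norm (U k α) * (1/v) := by
          exact mul_le_mul_of_nonneg_left h2 h4
      _ ≤ (Complex.normSq (U j α) + Complex.normSq (U k α)) / 2 * (1 / v) := by
          apply mul_le_mul_of_nonneg_right h3 (by positivity)
  refine le_trans (Finset.sum_le_sum (fun α _ => step2 α)) ?_
  rw [← Finset.sum_mul]
  have : ∑ α : Fin n, (Complex.normSq (U j α) + Complex.normSq (U k α)) / 2
      = (∑ α, Complex.normSq (U j α)) / 2 + (∑ α, Complex.normSq (U k α)) / 2 := by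
    rw [← Finset.sum_div, Finset.sum_add_distrib, add_div]
  rw [this, hrow j, hrow k]
  norm_num

lemma det_entry_step {n : ℕ} (B : Matrix (Fin n) (Fin n) ℝ) (hB : B.IsSymm)
    (u v v' s₀ : ℝ) (hv : 0 < v) (hs : 1 ≤ s₀) (hv' : v' = s₀ * v) (j k : Fin n) :
    Norm.norm (resolv B ((u:ℂ) + (v:ℂ) * Complex.I) j k)
      ≤ Norm.norm (resolv B ((u:ℂ) + (v':ℂ) * Complex.I) j k)
        + s₀ / 2 * (Norm.norm (resolv B ((u:ℂ) + (v':ℂ) * Complex.I) j j)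
          + Norm.norm (resolv B ((u:ℂ) + (v':ℂ) * Complex.I) k k)) := by
  obtain ⟨U, lam, hrow, hcol, hrep⟩ := resolv_repr B hB
  have hs0 : 0 < s₀ := lt_of_lt_of_le one_pos hs
  have hv'pos : 0 < v' := by rw [hv']; positivity
  have hvv' : v ≤ v' := by rw [hv']; nlinarith
  set z : ℂ := (u:ℂ) + (v:ℂ) * Complex.I with hzdef
  set z' : ℂ := (u:ℂ) + (v':ℂ) * Complex.I with hz'def
  have hz : z.im ≠ 0 := by rw [hzdef, im_uv]; exact hv.ne'
  have hz' : z'.im ≠ 0 := by rw [hz'def, im_uv]; exact hv'pos.ne'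
  -- the diagonal imaginary part formula at z'
  have hdiag : ∀ i : Fin n, (resolv B z' i i).im
      = v' * ∑ α, Complex.normSq (U i α) / Complex.normSq ((lam α : ℂ) - z') := by
    intro i
    rw [hrep _ hz' i i, Complex.im_sum, Finset.mul_sum]
    apply Finset.sum_congr rfl
    intro α _
    have hconj : U i α * (starRingEnd ℂ) (U i α) = (Complex.normSq (U i α) : ℂ) := by
      rw [Complex.normSq_eq_conj_mul_self]; ring
    rw [hconj, Complex.im_ofReal_mul, hz'def, inv_im_sub (lam α) u v', ← hz'def]
    rw [div_eq_mul_inv, div_eq_mul_inv]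
    ring
  -- key difference bound
  have hene : ∀ α, ((lam α : ℂ) - z) ≠ 0 := fun α => abs_sub_pos' (lam α) u v hv
  have he'ne : ∀ α, ((lam α : ℂ) - z') ≠ 0 := fun α => abs_sub_pos' (lam α) u v' hv'pos
  have hkey : Norm.norm (resolv B z j k - resolv B z' j k)
      ≤ s₀ / 2 * ((resolv B z' j j).im + (resolv B z' k k).im) := by
    rw [hrep _ hz j k, hrep _ hz' j k, ← Finset.sum_sub_distrib]
    refine le_trans (norm_sum_le _ _) ?_
    have term : ∀ α : Fin n,
        Norm.norm (U j α * (starRingEnd ℂ) (U k α) * ((lam α:ℂ) - z)⁻¹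
          - U j α * (starRingEnd ℂ) (U k α) * ((lam α:ℂ) - z')⁻¹)
        ≤ s₀ / 2 * (v' * ((Complex.normSq (U j α) + Complex.normSq (U k α))
            / Complex.normSq ((lam α : ℂ) - z'))) := by
      intro α
      rw [← mul_sub, norm_mul, norm_mul, Complex.norm_conj]
      have hsub : ((lam α:ℂ) - z)⁻¹ - ((lam α:ℂ) - z')⁻¹
          = (z - z') / (((lam α:ℂ) - z) * ((lam α:ℂ) - z')) := by
        rw [inv_sub_inv (hene α) (he'ne α)]
        congr 1
        ring
      have habs : Norm.norm (((lam α:ℂ) - z)⁻¹ - ((lam α:ℂ) - z')⁻¹)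
          = (v' - v) / (Norm.norm ((lam α:ℂ) - z) * Norm.norm ((lam α:ℂ) - z')) := by
        rw [hsub, norm_div, norm_mul]
        congr 1
        have : z - z' = ((v - v' : ℝ) : ℂ) * Complex.I := by
          rw [hzdef, hz'def]; push_cast; ring
        rw [this, norm_mul, Complex.norm_I, Complex.norm_real, Real.norm_eq_abs, mul_one, abs_of_nonpos (by linarith)]
        ring
      rw [habs]
      -- bounds
      have e1 : v ≤ Norm.norm ((lam α:ℂ) - z) := v_le_abs_sub (lam α) u v hv.le
      have e2 : v' ≤ Norm.norm ((lam α:ℂ) - z') := v_le_abs_sub (lam α) u v' hv'pos.le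
      have e3 : Norm.norm ((lam α:ℂ) - z') ≤ s₀ * Norm.norm ((lam α:ℂ) - z) :=
        abs_sub_scale (lam α) u hv hs hv'
      have e4 := abs_mul_abs_le (U j α) (U k α)
      have habspos : 0 < Norm.norm ((lam α:ℂ) - z) := lt_of_lt_of_le hv e1
      have habspos' : 0 < Norm.norm ((lam α:ℂ) - z') := lt_of_lt_of_le hv'pos e2
      have hns' : Complex.normSq ((lam α:ℂ) - z') = Norm.norm ((lam α:ℂ) - z') ^ 2 :=
        (Complex.sq_norm _).symm
      -- (v'-v)/(|e||e'|) ≤ s₀ * v' / |e'|^2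
      have frac : (v' - v) / (Norm.norm ((lam α:ℂ) - z) * Norm.norm ((lam α:ℂ) - z'))
          ≤ s₀ * v' / Complex.normSq ((lam α:ℂ) - z') := by
        rw [hns']
        rw [div_le_div_iff₀ (by positivity) (by positivity)]
        have h6 : Norm.norm ((lam α:ℂ) - z') * Norm.norm ((lam α:ℂ) - z')
            ≤ s₀ * Norm.norm ((lam α:ℂ) - z) * Norm.norm ((lam α:ℂ) - z') :=
          mul_le_mul_of_nonneg_right e3 habspos'.le
        nlinarith [habspos.le, habspos'.le, mul_pos habspos habspos']
      have hUpos : (0:ℝ) ≤ Norm.norm (U j α) * Norm.norm (U k α) := by positivity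
      calc Norm.norm (U j α) * Norm.norm (U k α)
            * ((v' - v) / (Norm.norm ((lam α:ℂ) - z) * Norm.norm ((lam α:ℂ) - z')))
          ≤ Norm.norm (U j α) * Norm.norm (U k α)
            * (s₀ * v' / Complex.normSq ((lam α:ℂ) - z')) :=
            mul_le_mul_of_nonneg_left frac hUpos
        _ ≤ (Complex.normSq (U j α) + Complex.normSq (U k α)) / 2
            * (s₀ * v' / Complex.normSq ((lam α:ℂ) - z')) := by
            apply mul_le_mul_of_nonneg_right e4
            have : 0 < Complex.normSq ((lam α:ℂ) - z') := by
              rw [hns']; positivity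
            positivity
        _ = s₀ / 2 * (v' * ((Complex.normSq (U j α) + Complex.normSq (U k α))
            / Complex.normSq ((lam α : ℂ) - z'))) := by
            rw [div_eq_mul_inv, div_eq_mul_inv, div_eq_mul_inv]
            ring
    refine le_trans (Finset.sum_le_sum (fun α _ => term α)) ?_
    rw [hdiag j, hdiag k]
    rw [← Finset.mul_sum, ← Finset.mul_sum]
    have : ∑ α : Fin n, (Complex.normSq (U j α) + Complex.normSq (U k α))
        / Complex.normSq ((lam α:ℂ) - z')
        = (∑ α, Complex.normSq (U j α) / Complex.normSq ((lam α:ℂ) - z'))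
          + ∑ α, Complex.normSq (U k α) / Complex.normSq ((lam α:ℂ) - z') := by
      rw [← Finset.sum_add_distrib]
      apply Finset.sum_congr rfl
      intro α _
      rw [add_div]
    rw [this]
    apply le_of_eq
    ring
  calc Norm.norm (resolv B z j k)
      = Norm.norm (resolv B z' j k + (resolv B z j k - resolv B z' j k)) := by ring_nf
    _ ≤ Norm.norm (resolv B z' j k) + Norm.norm (resolv B z j k - resolv B z' j k) :=
        norm_add_le _ _
    _ ≤ Norm.norm (resolv B z' j k)
        + s₀ / 2 * ((resolv B z' j j).im + (resolv B z' k k).im) := by linarith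
    _ ≤ Norm.norm (resolv B z' j k)
        + s₀ / 2 * (Norm.norm (resolv B z' j j) + Norm.norm (resolv B z' k k)) := by
        have h1 := Complex.im_le_norm (resolv B z' j j)
        have h2 := Complex.im_le_norm (resolv B z' k k)
        nlinarith

lemma det_b {n : ℕ} (hn : n ≠ 0) (B : Matrix (Fin n) (Fin n) ℝ) (hB : B.IsSymm)
    (u v v' s₀ : ℝ) (hv : 0 < v) (hs : 1 ≤ s₀) (hv' : v' = s₀ * v) :
    v ≤ Norm.norm (((u:ℂ) + (v:ℂ) * Complex.I) + mSt B ((u:ℂ) + (v:ℂ) * Complex.I)) ∧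
    Norm.norm (((u:ℂ) + (v':ℂ) * Complex.I) + mSt B ((u:ℂ) + (v':ℂ) * Complex.I))
      ≤ s₀ * Norm.norm (((u:ℂ) + (v:ℂ) * Complex.I) + mSt B ((u:ℂ) + (v:ℂ) * Complex.I)) := by
  obtain ⟨U, lam, hrow, hcol, hrep⟩ := resolv_repr B hB
  have hs0 : 0 < s₀ := lt_of_lt_of_le one_pos hs
  have hv'pos : 0 < v' := by rw [hv']; positivity
  have hvv' : v ≤ v' := by rw [hv']; nlinarith
  have hN : (0:ℝ) < n := by exact_mod_cast Nat.pos_of_ne_zero hn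
  set z : ℂ := (u:ℂ) + (v:ℂ) * Complex.I with hzdef
  set z' : ℂ := (u:ℂ) + (v':ℂ) * Complex.I with hz'def
  have hz : z.im ≠ 0 := by rw [hzdef, im_uv]; exact hv.ne'
  have hz' : z'.im ≠ 0 := by rw [hz'def, im_uv]; exact hv'pos.ne'
  -- trace formula
  have htr : ∀ w : ℂ, w.im ≠ 0 → (resolv B w).trace = ∑ α, ((lam α : ℂ) - w)⁻¹ := by
    intro w hw
    rw [Matrix.trace]
    calc ∑ i, (resolv B w).diag i
        = ∑ i, ∑ α, U i α * (starRingEnd ℂ) (U i α) * ((lam α:ℂ) - w)⁻¹ := by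
          apply Finset.sum_congr rfl
          intro i _
          rw [Matrix.diag_apply, hrep _ hw i i]
      _ = ∑ α, ∑ i, U i α * (starRingEnd ℂ) (U i α) * ((lam α:ℂ) - w)⁻¹ := Finset.sum_comm
      _ = ∑ α, ((lam α:ℂ) - w)⁻¹ := by
          apply Finset.sum_congr rfl
          intro α _
          have : ∀ i : Fin n, U i α * (starRingEnd ℂ) (U i α) * ((lam α:ℂ) - w)⁻¹
              = (Complex.normSq (U i α) : ℂ) * ((lam α:ℂ) - w)⁻¹ := by
            intro i
            rw [Complex.normSq_eq_conj_mul_self]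
            ring
          rw [Finset.sum_congr rfl (fun i _ => this i), ← Finset.sum_mul]
          have hsum : ∑ i : Fin n, (Complex.normSq (U i α) : ℂ) = 1 := by
            rw [← Complex.ofReal_sum]
            rw [hcol α]
            norm_num
          rw [hsum, one_mul]
  -- mSt formula
  have hm : ∀ w : ℂ, w.im ≠ 0 →
      mSt B w = (((n:ℝ)⁻¹ : ℝ) : ℂ) * ∑ α, ((lam α : ℂ) - w)⁻¹ := by
    intro w hw
    rw [mSt, htr w hw]
    norm_num
  -- imaginary part of z + mSt
  have him : ∀ w : ℝ, 0 < w → (((u:ℂ) + (w:ℂ) * Complex.I) + mSt B ((u:ℂ) + (w:ℂ) * Complex.I)).im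
      = w + (n:ℝ)⁻¹ * ∑ α, w / Complex.normSq ((lam α:ℂ) - ((u:ℂ) + (w:ℂ) * Complex.I)) := by
    intro w hw
    have hwim : ((u:ℂ) + (w:ℂ) * Complex.I).im ≠ 0 := by rw [im_uv]; exact hw.ne'
    rw [Complex.add_im, im_uv, hm _ hwim, Complex.im_ofReal_mul, Complex.im_sum]
    congr 1
    congr 1
    exact Finset.sum_congr rfl (fun α _ => inv_im_sub (lam α) u w)
  have hterm_nonneg : ∀ (w : ℝ) (α : Fin n), 0 < w →
      0 ≤ w / Complex.normSq ((lam α:ℂ) - ((u:ℂ) + (w:ℂ) * Complex.I)) := by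
    intro w α hw
    have := abs_sub_pos' (lam α) u w hw
    have h2 : 0 < Complex.normSq ((lam α:ℂ) - ((u:ℂ) + (w:ℂ) * Complex.I)) :=
      Complex.normSq_pos.mpr this
    positivity
  -- lower bound : v ≤ im ≤ abs
  have hlow : v ≤ Norm.norm (z + mSt B z) := by
    refine le_trans ?_ (Complex.im_le_norm _)
    rw [hzdef, him v hv, ← hzdef]
    have : 0 ≤ (n:ℝ)⁻¹ * ∑ α, v / Complex.normSq ((lam α:ℂ) - z) := by
      apply mul_nonneg (by positivity)
      apply Finset.sum_nonneg
      intro α _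
      rw [hzdef]
      exact hterm_nonneg v α hv
    linarith
  refine ⟨hlow, ?_⟩
  -- step bound
  have hdiff : Norm.norm ((z' + mSt B z') - (z + mSt B z)) ≤ (s₀ - 1) * (z + mSt B z).im := by
    have hrw : (z' + mSt B z') - (z + mSt B z)
        = ((v' - v : ℝ) : ℂ) * Complex.I
          + (((n:ℝ)⁻¹ : ℝ) : ℂ) * ∑ α, (((lam α:ℂ) - z')⁻¹ - ((lam α:ℂ) - z)⁻¹) := by
      rw [hm _ hz, hm _ hz', Finset.sum_sub_distrib, hzdef, hz'def]
      push_cast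
      ring
    rw [hrw]
    have habs1 : Norm.norm (((v' - v : ℝ) : ℂ) * Complex.I) = v' - v := by
      rw [norm_mul, Complex.norm_I, Complex.norm_real, Real.norm_eq_abs, mul_one, abs_of_nonneg (by linarith)]
    have habs2 : Norm.norm ((((n:ℝ)⁻¹ : ℝ) : ℂ) * ∑ α, (((lam α:ℂ) - z')⁻¹ - ((lam α:ℂ) - z)⁻¹))
        ≤ (n:ℝ)⁻¹ * ((v' - v) / v * ∑ α, v / Complex.normSq ((lam α:ℂ) - z)) := by
      rw [norm_mul, Complex.norm_real, Real.norm_eq_abs, abs_of_nonneg (by positivity)]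
      apply mul_le_mul_of_nonneg_left ?_ (by positivity)
      refine le_trans (norm_sum_le _ _) ?_
      rw [Finset.mul_sum]
      apply Finset.sum_le_sum
      intro α _
      have hene : ((lam α : ℂ) - z) ≠ 0 := abs_sub_pos' (lam α) u v hv
      have he'ne : ((lam α : ℂ) - z') ≠ 0 := abs_sub_pos' (lam α) u v' hv'pos
      have hsub : ((lam α:ℂ) - z')⁻¹ - ((lam α:ℂ) - z)⁻¹
          = (z' - z) / (((lam α:ℂ) - z) * ((lam α:ℂ) - z')) := by
        rw [inv_sub_inv he'ne hene]
        rw [div_eq_div_iff (by exact mul_ne_zero he'ne hene) (by exact mul_ne_zero hene he'ne)]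
        ring
      rw [hsub, norm_div, norm_mul]
      have habsz : Norm.norm (z' - z) = v' - v := by
        have : z' - z = ((v' - v : ℝ) : ℂ) * Complex.I := by
          rw [hzdef, hz'def]; push_cast; ring
        rw [this, norm_mul, Complex.norm_I, Complex.norm_real, Real.norm_eq_abs, mul_one,
          abs_of_nonneg (by linarith)]
      rw [habsz]
      have e1 : v ≤ Norm.norm ((lam α:ℂ) - z) := v_le_abs_sub (lam α) u v hv.le
      have e2 : Norm.norm ((lam α:ℂ) - z) ≤ Norm.norm ((lam α:ℂ) - z') := by
        rw [hzdef, hz'def]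
        exact abs_sub_mono (lam α) u hvv' hv.le
      have habspos : 0 < Norm.norm ((lam α:ℂ) - z) := lt_of_lt_of_le hv e1
      have hns : Complex.normSq ((lam α:ℂ) - z) = Norm.norm ((lam α:ℂ) - z) ^ 2 :=
        (Complex.sq_norm _).symm
      -- (v'-v)/(|e||e'|) ≤ (v'-v)/v * (v/|e|²)
      have : (v' - v) / v * (v / Complex.normSq ((lam α:ℂ) - z))
          = (v' - v) / Complex.normSq ((lam α:ℂ) - z) := by
        field_simp
      rw [this, hns]
      apply div_le_div_of_nonneg_left (by linarith) (by positivity)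
      nlinarith
    refine le_trans (norm_add_le _ _) ?_
    rw [habs1]
    rw [hzdef, him v hv, ← hzdef]
    have hv'v : (v' - v) / v = s₀ - 1 := by rw [hv']; field_simp
    have hveq : v' - v = (s₀ - 1) * v := by rw [hv']; ring
    rw [hv'v] at habs2
    linarith [habs2, hveq]
  have habs_im : (z + mSt B z).im ≤ Norm.norm (z + mSt B z) := Complex.im_le_norm _
  calc Norm.norm (z' + mSt B z')
      = Norm.norm ((z + mSt B z) + ((z' + mSt B z') - (z + mSt B z))) := by ring_nf
    _ ≤ Norm.norm (z + mSt B z) + Norm.norm ((z' + mSt B z') - (z + mSt B z)) :=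
        norm_add_le _ _
    _ ≤ Norm.norm (z + mSt B z) + (s₀ - 1) * (z + mSt B z).im := by linarith
    _ ≤ s₀ * Norm.norm (z + mSt B z) := by nlinarith

section Meas
variable {Ω : Type} [MeasurableSpace Ω]

lemma measurable_matrix_det {n : ℕ} {f : Ω → Matrix (Fin n) (Fin n) ℂ}
    (h : ∀ i j, Measurable fun ω => f ω i j) : Measurable fun ω => (f ω).det := by
  simp_rw [Matrix.det_apply]
  apply Finset.measurable_sum
  intro σ _
  apply Measurable.const_smul
  exact Finset.measurable_prod _ (fun i _ => h (σ i) i)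

lemma measurable_resolv_entry {n : ℕ} {W : Ω → Matrix (Fin n) (Fin n) ℝ}
    (hmeas : ∀ i j, Measurable fun ω => W ω i j) (z : ℂ) (j k : Fin n) :
    Measurable fun ω => resolv (W ω) z j k := by
  have hM : ∀ i l : Fin n,
      Measurable fun ω => ((W ω).map (fun x => (x:ℂ)) - z • (1 : Matrix (Fin n) (Fin n) ℂ)) i l := by
    intro i l
    simp only [Matrix.sub_apply, Matrix.map_apply, Matrix.smul_apply, Matrix.one_apply]
    exact (Complex.measurable_ofReal.comp (hmeas i l)).sub measurable_const
  unfold resolv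
  simp_rw [Matrix.inv_def, Matrix.smul_apply, smul_eq_mul, Ring.inverse_eq_inv]
  apply Measurable.mul
  · exact (measurable_matrix_det hM).inv
  · simp_rw [Matrix.adjugate_apply]
    apply measurable_matrix_det
    intro i l
    simp_rw [Matrix.updateRow_apply]
    by_cases hik : i = k
    · simp [hik]
    · simp only [hik, if_false]
      exact hM i l

lemma measurable_b {n : ℕ} {W : Ω → Matrix (Fin n) (Fin n) ℝ}
    (hmeas : ∀ i j, Measurable fun ω => W ω i j) (z : ℂ) :
    Measurable fun ω => z + mSt (W ω) z := by
  apply Measurable.const_add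
  unfold mSt
  apply Measurable.const_mul
  unfold Matrix.trace
  apply Finset.measurable_sum
  intro i _
  exact measurable_resolv_entry hmeas z i i

lemma integrable_of_bdd {f : Ω → ℝ} {P : Measure Ω} [IsProbabilityMeasure P]
    (hf : Measurable f) (h0 : ∀ ω, 0 ≤ f ω) {C : ℝ} (hb : ∀ ω, f ω ≤ C) :
    Integrable f P := by
  refine Integrable.mono' (integrable_const C) hf.aestronglyMeasurable ?_
  filter_upwards with ω
  rw [Real.norm_eq_abs, abs_of_nonneg (h0 ω)]
  exact hb ω

end Meas

lemma real_add_rpow_le (a b p : ℝ) (ha : 0 ≤ a) (hb : 0 ≤ b) (hp : 1 ≤ p) :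
    (a + b) ^ p ≤ 2 ^ (p - 1) * (a ^ p + b ^ p) := by
  have h := NNReal.rpow_add_le_mul_rpow_add_rpow a.toNNReal b.toNNReal hp
  have h2 := NNReal.coe_le_coe.mpr h
  push_cast [NNReal.coe_rpow] at h2
  rwa [Real.coe_toNNReal _ ha, Real.coe_toNNReal _ hb] at h2

/-- Lemma 3.3 (descent lemma): moment bounds on resolvent entries at scale `vt`
propagate down to scale `vt/s₀` at the cost of factors of `s₀`. -/
theorem descent_lemma
    {Ω : Type} [MeasurableSpace Ω] (P : Measure Ω) [IsProbabilityMeasure P]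
    (n : ℕ) (W : Ω → Matrix (Fin n) (Fin n) ℝ)
    (_hmeas : ∀ i j, Measurable fun ω => W ω i j)
    (_hsymm : ∀ ω, (W ω).IsSymm)
    (u C₀ A₁ κ vt p : ℝ) (hC₀ : 0 < C₀) (hA₁ : 0 < A₁) (hκ : 0 < κ) (hvt : 0 < vt)
    (hp : 1 ≤ p)
    (hyp : ∀ v' : ℝ, vt ≤ v' → p ≤ A₁ * (n * v') ^ κ →
      (∀ j k : Fin n,
        (∫ ω, Norm.norm (resolv (W ω) (u + v' * Complex.I) j k) ^ p ∂P) ≤ C₀ ^ p) ∧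
      (∫ ω, Norm.norm
          ((u + v' * Complex.I) + mSt (W ω) (u + v' * Complex.I)) ^ (-p) ∂P) ≤ C₀ ^ p) :
    ∀ s₀ v : ℝ, 1 ≤ s₀ → vt / s₀ ≤ v → p ≤ A₁ * (n * (s₀ * v)) ^ κ →
      (∀ j k : Fin n,
        (∫ ω, Norm.norm (resolv (W ω) (u + v * Complex.I) j k) ^ p ∂P)
          ≤ 2 ^ p * (1 + s₀) ^ p * C₀ ^ p) ∧
      (∫ ω, Norm.norm
          ((u + v * Complex.I) + mSt (W ω) (u + v * Complex.I)) ^ (-p) ∂P)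
        ≤ s₀ ^ p * C₀ ^ p := by
  intro s₀ v hs₀ hvs hple
  have hs0pos : (0:ℝ) < s₀ := lt_of_lt_of_le one_pos hs₀
  have hv : 0 < v := lt_of_lt_of_le (div_pos hvt hs0pos) hvs
  have hv' : 0 < s₀ * v := by positivity
  have hp0 : 0 ≤ p := le_trans zero_le_one hp
  have hn : n ≠ 0 := by
    intro h
    subst h
    rw [Nat.cast_zero, zero_mul, Real.zero_rpow hκ.ne', mul_zero] at hple
    linarith
  have hvt' : vt ≤ s₀ * v := by
    rw [div_le_iff₀ hs0pos] at hvs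
    linarith
  obtain ⟨hyp1, hyp2⟩ := hyp (s₀ * v) hvt' hple
  set z : ℂ := (u:ℂ) + (v:ℂ) * Complex.I with hzdef
  set z' : ℂ := (u:ℂ) + ((s₀ * v : ℝ):ℂ) * Complex.I with hz'def
  -- common constants
  have hTpos : (0:ℝ) < 2 ^ p := Real.rpow_pos_of_pos two_pos p
  have hKpos : (0:ℝ) < 2 ^ (p-1) := Real.rpow_pos_of_pos two_pos (p-1)
  have hCp : (0:ℝ) < C₀ ^ p := Real.rpow_pos_of_pos hC₀ p
  have e1 : (2:ℝ) ^ (p-1) = 2 ^ p / 2 := by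
    rw [Real.rpow_sub two_pos, Real.rpow_one]
  have a1 : (1:ℝ) ≤ (1+s₀) ^ p := Real.one_le_rpow (by linarith) hp0
  have a2 : s₀ ^ p ≤ (1+s₀) ^ p := Real.rpow_le_rpow hs0pos.le (by linarith) hp0
  constructor
  · -- entries
    intro j k
    set X : Ω → ℝ := fun ω => Norm.norm (resolv (W ω) z j k) with hX
    set A : Ω → ℝ := fun ω => Norm.norm (resolv (W ω) z' j k) with hA
    set Dj : Ω → ℝ := fun ω => Norm.norm (resolv (W ω) z' j j) with hDj
    set Dk : Ω → ℝ := fun ω => Norm.norm (resolv (W ω) z' k k) with hDk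
    have measXp : Measurable fun ω => X ω ^ p :=
      (Real.continuous_rpow_const hp0).measurable.comp
        ((measurable_resolv_entry _hmeas z j k).norm)
    have measAp : Measurable fun ω => A ω ^ p :=
      (Real.continuous_rpow_const hp0).measurable.comp
        ((measurable_resolv_entry _hmeas z' j k).norm)
    have measDjp : Measurable fun ω => Dj ω ^ p :=
      (Real.continuous_rpow_const hp0).measurable.comp
        ((measurable_resolv_entry _hmeas z' j j).norm)
    have measDkp : Measurable fun ω => Dk ω ^ p :=
      (Real.continuous_rpow_const hp0).measurable.comp
        ((measurable_resolv_entry _hmeas z' k k).norm)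
    have intXp : Integrable (fun ω => X ω ^ p) P := by
      apply integrable_of_bdd measXp (fun ω => Real.rpow_nonneg (norm_nonneg _) p)
        (C := (1/v) ^ p)
      intro ω
      exact Real.rpow_le_rpow (norm_nonneg _)
        (det_entry_trivial (W ω) (_hsymm ω) u v hv j k) hp0
    have intbdd : ∀ (a b : Fin n), Integrable (fun ω => Norm.norm (resolv (W ω) z' a b) ^ p) P := by
      intro a b
      apply integrable_of_bdd
        ((Real.continuous_rpow_const hp0).measurable.comp
          ((measurable_resolv_entry _hmeas z' a b).norm))
        (fun ω => Real.rpow_nonneg (norm_nonneg _) p) (C := (1/(s₀*v)) ^ p)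
      intro ω
      exact Real.rpow_le_rpow (norm_nonneg _)
        (det_entry_trivial (W ω) (_hsymm ω) u (s₀*v) hv' a b) hp0
    have intAp : Integrable (fun ω => A ω ^ p) P := intbdd j k
    have intDjp : Integrable (fun ω => Dj ω ^ p) P := intbdd j j
    have intDkp : Integrable (fun ω => Dk ω ^ p) P := intbdd k k
    -- pointwise bound
    have hpt : ∀ ω, X ω ^ p
        ≤ 2^(p-1) * A ω ^ p + (2^(p-1) * ((s₀/2)^p * 2^(p-1))) * (Dj ω ^ p + Dk ω ^ p) := by
      intro ω
      have h1 : X ω ≤ A ω + s₀/2 * (Dj ω + Dk ω) :=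
        det_entry_step (W ω) (_hsymm ω) u v (s₀*v) s₀ hv hs₀ rfl j k
      have h2 : X ω ^ p ≤ (A ω + s₀/2 * (Dj ω + Dk ω)) ^ p :=
        Real.rpow_le_rpow (norm_nonneg _) h1 hp0
      have h3 : (A ω + s₀/2 * (Dj ω + Dk ω)) ^ p
          ≤ 2^(p-1) * (A ω ^ p + (s₀/2 * (Dj ω + Dk ω)) ^ p) :=
        real_add_rpow_le _ _ p (norm_nonneg _) (by positivity) hp
      have h4 : (s₀/2 * (Dj ω + Dk ω)) ^ p = (s₀/2)^p * (Dj ω + Dk ω) ^ p :=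
        Real.mul_rpow (by positivity) (by positivity)
      have h5 : (Dj ω + Dk ω) ^ p ≤ 2^(p-1) * (Dj ω ^ p + Dk ω ^ p) :=
        real_add_rpow_le _ _ p (norm_nonneg _) (norm_nonneg _) hp
      have h6 : (s₀/2)^p * (Dj ω + Dk ω) ^ p ≤ (s₀/2)^p * (2^(p-1) * (Dj ω ^ p + Dk ω ^ p)) :=
        mul_le_mul_of_nonneg_left h5 (Real.rpow_nonneg (by positivity) p)
      calc X ω ^ p ≤ 2^(p-1) * (A ω ^ p + (s₀/2 * (Dj ω + Dk ω)) ^ p) := le_trans h2 h3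
        _ ≤ 2^(p-1) * (A ω ^ p + (s₀/2)^p * (2^(p-1) * (Dj ω ^ p + Dk ω ^ p))) := by
            rw [h4]
            exact mul_le_mul_of_nonneg_left (by linarith) hKpos.le
        _ = 2^(p-1) * A ω ^ p + (2^(p-1) * ((s₀/2)^p * 2^(p-1))) * (Dj ω ^ p + Dk ω ^ p) := by
            ring
    -- integrate
    have intsum : Integrable (fun ω => Dj ω ^ p + Dk ω ^ p) P := intDjp.add intDkp
    have intc1 : Integrable (fun ω => 2^(p-1) * A ω ^ p) P := intAp.const_mul _
    have intc2 : Integrable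
        (fun ω => (2^(p-1) * ((s₀/2)^p * 2^(p-1))) * (Dj ω ^ p + Dk ω ^ p)) P :=
      intsum.const_mul _
    have intg : Integrable (fun ω => 2^(p-1) * A ω ^ p
        + (2^(p-1) * ((s₀/2)^p * 2^(p-1))) * (Dj ω ^ p + Dk ω ^ p)) P := intc1.add intc2
    have hint1 : (∫ ω, X ω ^ p ∂P) ≤ ∫ ω, (2^(p-1) * A ω ^ p
        + (2^(p-1) * ((s₀/2)^p * 2^(p-1))) * (Dj ω ^ p + Dk ω ^ p)) ∂P :=
      integral_mono intXp intg hpt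
    have hint2 : (∫ ω, (2^(p-1) * A ω ^ p
        + (2^(p-1) * ((s₀/2)^p * 2^(p-1))) * (Dj ω ^ p + Dk ω ^ p)) ∂P)
        = 2^(p-1) * (∫ ω, A ω ^ p ∂P)
          + (2^(p-1) * ((s₀/2)^p * 2^(p-1))) * ((∫ ω, Dj ω ^ p ∂P) + (∫ ω, Dk ω ^ p ∂P)) := by
      rw [integral_add intc1 intc2, integral_const_mul, integral_const_mul,
        integral_add intDjp intDkp]
    have hA1 : (∫ ω, A ω ^ p ∂P) ≤ C₀ ^ p := hyp1 j k
    have hDj1 : (∫ ω, Dj ω ^ p ∂P) ≤ C₀ ^ p := hyp1 j j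
    have hDk1 : (∫ ω, Dk ω ^ p ∂P) ≤ C₀ ^ p := hyp1 k k
    have hposAint : 0 ≤ ∫ ω, Dj ω ^ p ∂P :=
      integral_nonneg (fun ω => Real.rpow_nonneg (norm_nonneg _) p)
    have hposBint : 0 ≤ ∫ ω, Dk ω ^ p ∂P :=
      integral_nonneg (fun ω => Real.rpow_nonneg (norm_nonneg _) p)
    have e2 : (s₀/2)^p = s₀^p / 2^p := Real.div_rpow hs0pos.le (by norm_num : (0:ℝ) ≤ 2) p
    have hc3 : 2^(p-1) * ((s₀/2)^p * 2^(p-1)) = 2^p * s₀^p / 4 := by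
      rw [e1, e2]
      field_simp
      ring
    have hfinal : 2^(p-1) * C₀^p + (2^p * s₀^p / 4) * (C₀^p + C₀^p) ≤ 2^p * (1+s₀)^p * C₀^p := by
      rw [e1]
      have key : (1:ℝ) + s₀^p ≤ 2 * (1+s₀)^p := by linarith
      nlinarith [mul_le_mul_of_nonneg_left key (mul_nonneg hTpos.le hCp.le)]
    have hc3pos : (0:ℝ) ≤ 2^p * s₀^p / 4 := by positivity
    calc (∫ ω, X ω ^ p ∂P)
        ≤ 2^(p-1) * (∫ ω, A ω ^ p ∂P)
          + (2^(p-1) * ((s₀/2)^p * 2^(p-1))) * ((∫ ω, Dj ω ^ p ∂P) + (∫ ω, Dk ω ^ p ∂P)) := by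
          rw [← hint2]; exact hint1
      _ ≤ 2^(p-1) * C₀^p + (2^p * s₀^p / 4) * (C₀^p + C₀^p) := by
          rw [hc3]
          have t1 : 2^(p-1) * (∫ ω, A ω ^ p ∂P) ≤ 2^(p-1) * C₀^p :=
            mul_le_mul_of_nonneg_left hA1 hKpos.le
          have t2 : (2^p * s₀^p / 4) * ((∫ ω, Dj ω ^ p ∂P) + (∫ ω, Dk ω ^ p ∂P))
              ≤ (2^p * s₀^p / 4) * (C₀^p + C₀^p) :=
            mul_le_mul_of_nonneg_left (by linarith) hc3pos
          linarith
      _ ≤ 2^p * (1+s₀)^p * C₀^p := hfinal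
  · -- Stieltjes part
    set Y : Ω → ℝ := fun ω => Norm.norm (z + mSt (W ω) z) with hY
    set Y' : Ω → ℝ := fun ω => Norm.norm (z' + mSt (W ω) z') with hY'
    have hYlow : ∀ ω, v ≤ Y ω := fun ω =>
      (det_b hn (W ω) (_hsymm ω) u v (s₀*v) s₀ hv hs₀ rfl).1
    have hY'low : ∀ ω, s₀ * v ≤ Y' ω := fun ω =>
      (det_b hn (W ω) (_hsymm ω) u (s₀*v) (s₀*v) 1 hv' le_rfl (by ring)).1
    have hstep : ∀ ω, Y' ω ≤ s₀ * Y ω := fun ω =>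
      (det_b hn (W ω) (_hsymm ω) u v (s₀*v) s₀ hv hs₀ rfl).2
    have hpt : ∀ ω, Y ω ^ (-p) ≤ s₀^p * Y' ω ^ (-p) := by
      intro ω
      have hy : 0 < Y ω := lt_of_lt_of_le hv (hYlow ω)
      have hy' : 0 < Y' ω := lt_of_lt_of_le hv' (hY'low ω)
      have hyx : Y' ω ^ p ≤ s₀^p * Y ω ^ p := by
        rw [← Real.mul_rpow hs0pos.le hy.le]
        exact Real.rpow_le_rpow (norm_nonneg _) (hstep ω) hp0
      have hxp : 0 < Y ω ^ p := Real.rpow_pos_of_pos hy p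
      have hy'p : 0 < Y' ω ^ p := Real.rpow_pos_of_pos hy' p
      have h1 : (s₀^p * Y ω ^ p)⁻¹ ≤ (Y' ω ^ p)⁻¹ := inv_anti₀ hy'p hyx
      have h2 : (Y ω ^ p)⁻¹ = s₀^p * (s₀^p * Y ω ^ p)⁻¹ := by
        have hsp : (0:ℝ) < s₀^p := Real.rpow_pos_of_pos hs0pos p
        field_simp
      rw [Real.rpow_neg hy.le, Real.rpow_neg hy'.le, h2]
      exact mul_le_mul_of_nonneg_left h1 (Real.rpow_nonneg hs0pos.le p)
    -- measurability and integrability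
    have hrwY : (fun ω => Y ω ^ (-p)) = fun ω => (Y ω ^ p)⁻¹ :=
      funext fun ω => Real.rpow_neg (norm_nonneg _) p
    have hrwY' : (fun ω => Y' ω ^ (-p)) = fun ω => (Y' ω ^ p)⁻¹ :=
      funext fun ω => Real.rpow_neg (norm_nonneg _) p
    have measL : Measurable fun ω => Y ω ^ (-p) := by
      rw [hrwY]
      exact ((Real.continuous_rpow_const hp0).measurable.comp
        ((measurable_b _hmeas z).norm)).inv
    have measR : Measurable fun ω => Y' ω ^ (-p) := by
      rw [hrwY']
      exact ((Real.continuous_rpow_const hp0).measurable.comp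
        ((measurable_b _hmeas z').norm)).inv
    have intL : Integrable (fun ω => Y ω ^ (-p)) P := by
      apply integrable_of_bdd measL (fun ω => Real.rpow_nonneg (norm_nonneg _) _)
        (C := v ^ (-p))
      intro ω
      exact Real.rpow_le_rpow_of_nonpos hv (hYlow ω) (neg_nonpos.mpr hp0)
    have intR : Integrable (fun ω => Y' ω ^ (-p)) P := by
      apply integrable_of_bdd measR (fun ω => Real.rpow_nonneg (norm_nonneg _) _)
        (C := (s₀*v) ^ (-p))
      intro ω
      exact Real.rpow_le_rpow_of_nonpos hv' (hY'low ω) (neg_nonpos.mpr hp0)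
    have intR2 : Integrable (fun ω => s₀^p * Y' ω ^ (-p)) P := intR.const_mul _
    calc (∫ ω, Y ω ^ (-p) ∂P)
        ≤ ∫ ω, s₀^p * Y' ω ^ (-p) ∂P := integral_mono intL intR2 hpt
      _ = s₀^p * ∫ ω, Y' ω ^ (-p) ∂P := integral_const_mul _ _
      _ ≤ s₀^p * C₀^p :=
          mul_le_mul_of_nonneg_left hyp2 (Real.rpow_nonneg hs0pos.le p)
end

section
/- Fix u ∈ ℝ, constants H₀ > 0, A₁ > 0, κ > 0, ṽ > 0 and an exponent p ≥ 1. Suppose that for every v' ≥ ṽ with 1 ≤ p ≤ A₁ (n v')^κ one has max_{1 ≤ j ≤ n} E (Im R_{jj}(u + i v'))^p ≤ H₀^p log^p n · Ψ(u + i v')^p, where Ψ(u + iv') := Im s(u + iv') + p/(n v'). Then for every s₀ ≥ 1 and every v ≥ ṽ/s₀ with 1 ≤ p ≤ A₁ (n s₀ v)^κ one has max_{1 ≤ j,k ≤ n} E (Im R_{jk}(u + i v))^p ≤ s₀^{2p} H₀^p log^p n · Ψ(u + i v)^p. -/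
set_option maxHeartbeats 1000000

open Matrix MeasureTheory

namespace DescentAux

variable {n : ℕ}

noncomputable def Az (M : Matrix (Fin n) (Fin n) ℝ) (z : ℂ) : Matrix (Fin n) (Fin n) ℂ :=
  M.map (fun x => (x : ℂ)) - z • (1 : Matrix (Fin n) (Fin n) ℂ)

def nsq (y : Fin n → ℂ) : ℝ := ∑ i, Complex.normSq (y i)

lemma nsq_nonneg (y : Fin n → ℂ) : 0 ≤ nsq y :=
  Finset.sum_nonneg fun i _ => Complex.normSq_nonneg _

lemma nsq_eq_zero {y : Fin n → ℂ} (h : nsq y = 0) : y = 0 := by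
  funext i
  have := (Finset.sum_eq_zero_iff_of_nonneg (fun i _ => Complex.normSq_nonneg (y i))).1 h i
    (Finset.mem_univ i)
  simpa [Complex.normSq_eq_zero] using this

lemma im_quad_zero (M : Matrix (Fin n) (Fin n) ℝ) (hM : M.IsSymm) (y : Fin n → ℂ) :
    (star y ⬝ᵥ (M.map (fun x => (x : ℂ))).mulVec y).im = 0 := by
  rw [← Complex.conj_eq_iff_im]
  simp only [dotProduct, mulVec, map_apply, Pi.star_apply, map_sum, _root_.map_mul,
    Complex.conj_conj, Complex.conj_ofReal, RCLike.star_def]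
  simp_rw [Finset.mul_sum]
  rw [Finset.sum_comm]
  refine Finset.sum_congr rfl fun i _ => ?_
  refine Finset.sum_congr rfl fun l _ => ?_
  have h : M i l = M l i := by rw [← hM.apply i l]
  rw [h]; ring

lemma dot_im (M : Matrix (Fin n) (Fin n) ℝ) (hM : M.IsSymm) (z : ℂ) (y : Fin n → ℂ) :
    (star y ⬝ᵥ (Az M z).mulVec y).im = - z.im * nsq y := by
  have h1 : (Az M z).mulVec y = (M.map (fun x => (x : ℂ))).mulVec y - z • y := by
    rw [Az, sub_mulVec, smul_mulVec, one_mulVec]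
  rw [h1, dotProduct_sub, dotProduct_smul]
  have h2 : star y ⬝ᵥ y = (nsq y : ℂ) := by
    simp only [dotProduct, Pi.star_apply, nsq]
    push_cast
    refine Finset.sum_congr rfl fun i _ => ?_
    rw [RCLike.star_def, mul_comm, Complex.mul_conj]
  rw [h2, Complex.sub_im, im_quad_zero M hM y]
  simp [Complex.mul_im]

lemma cs (y x : Fin n → ℂ) :
    Complex.normSq (∑ i, (starRingEnd ℂ) (y i) * x i) ≤ nsq y * nsq x := by
  have h1 : ‖∑ i, (starRingEnd ℂ) (y i) * x i‖
      ≤ ∑ i, ‖y i‖ * ‖x i‖ := by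
    refine (norm_sum_le Finset.univ fun i => (starRingEnd ℂ) (y i) * x i).trans ?_
    refine Finset.sum_le_sum fun i _ => ?_
    rw [norm_mul]
    simp
  have h2 : (∑ i, ‖y i‖ * ‖x i‖) ^ 2
      ≤ (∑ i, ‖y i‖ ^ 2) * ∑ i, ‖x i‖ ^ 2 :=
    Finset.sum_mul_sq_le_sq_mul_sq _ _ _
  have h3 : nsq y = ∑ i, ‖y i‖ ^ 2 := by
    refine Finset.sum_congr rfl fun i _ => ?_
    rw [Complex.sq_norm]
  have h4 : nsq x = ∑ i, ‖x i‖ ^ 2 := by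
    refine Finset.sum_congr rfl fun i _ => ?_
    rw [Complex.sq_norm]
  have h5 : Complex.normSq (∑ i, (starRingEnd ℂ) (y i) * x i)
      = ‖∑ i, (starRingEnd ℂ) (y i) * x i‖ ^ 2 := (Complex.sq_norm _).symm
  rw [h5, h3, h4]
  have h0 : (0:ℝ) ≤ ‖∑ i, (starRingEnd ℂ) (y i) * x i‖ := by positivity
  nlinarith [Finset.sum_nonneg (fun i (_ : i ∈ Finset.univ) =>
    mul_nonneg (norm_nonneg (y i)) (norm_nonneg (x i)))]

/-- key norm bound: if `A y = x` then `z.im² nsq y ≤ nsq x`. -/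
lemma nsq_bound (M : Matrix (Fin n) (Fin n) ℝ) (hM : M.IsSymm) (z : ℂ)
    {y x : Fin n → ℂ} (h : (Az M z).mulVec y = x) :
    z.im ^ 2 * nsq y ≤ nsq x := by
  have hd : (star y ⬝ᵥ x).im = - z.im * nsq y := by rw [← h]; exact dot_im M hM z y
  have hcs : Complex.normSq (star y ⬝ᵥ x) ≤ nsq y * nsq x := by
    simpa [dotProduct] using cs y x
  have him : (star y ⬝ᵥ x).im ^ 2 ≤ Complex.normSq (star y ⬝ᵥ x) := by
    rw [Complex.normSq_apply]; nlinarith [sq_nonneg (star y ⬝ᵥ x).re]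
  rw [hd] at him
  rcases eq_or_lt_of_le (nsq_nonneg y) with h0 | h0
  · rw [← h0]; simpa using nsq_nonneg x
  · nlinarith [nsq_nonneg x]

lemma az_isUnit (M : Matrix (Fin n) (Fin n) ℝ) (hM : M.IsSymm) {z : ℂ} (hz : z.im ≠ 0) :
    IsUnit (Az M z).det := by
  rw [isUnit_iff_ne_zero]
  intro hdet
  obtain ⟨y, hy, hmv⟩ := Matrix.exists_mulVec_eq_zero_iff.2 hdet
  have := nsq_bound M hM z hmv
  have h0 : nsq (0 : Fin n → ℂ) = 0 := by simp [nsq]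
  rw [h0] at this
  have : nsq y ≤ 0 := by
    have hz2 : 0 < z.im ^ 2 := by positivity
    nlinarith [nsq_nonneg y]
  exact hy (nsq_eq_zero (le_antisymm this (nsq_nonneg y)))


lemma az_symm (M : Matrix (Fin n) (Fin n) ℝ) (hM : M.IsSymm) (z : ℂ) :
    (Az M z).IsSymm := by
  unfold Matrix.IsSymm Az
  rw [transpose_sub, transpose_smul, transpose_one, ← Matrix.transpose_map, hM]

lemma R_symm (M : Matrix (Fin n) (Fin n) ℝ) (hM : M.IsSymm) (z : ℂ) (j k : Fin n) :
    ((Az M z)⁻¹) k j = ((Az M z)⁻¹) j k := by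
  have h : ((Az M z)⁻¹).transpose = (Az M z)⁻¹ := by
    rw [Matrix.transpose_nonsing_inv, az_symm M hM z]
  conv_lhs => rw [← h]
  rfl

lemma az_conjT (M : Matrix (Fin n) (Fin n) ℝ) (hM : M.IsSymm) (z : ℂ) :
    (Az M z).conjTranspose = Az M ((starRingEnd ℂ) z) := by
  ext i l
  simp only [Az, conjTranspose_apply, Matrix.sub_apply, Matrix.smul_apply, map_apply, one_apply, star_sub,
    star_mul', smul_eq_mul]
  have h : M l i = M i l := by rw [← hM.apply l i]
  rw [h]
  by_cases hil : l = i
  · subst hil; simp [Complex.conj_ofReal, RCLike.star_def]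
  · have hli : ¬ i = l := fun hc => hil hc.symm
    simp [hil, hli, Complex.conj_ofReal, RCLike.star_def]

lemma entry_im (M : Matrix (Fin n) (Fin n) ℝ) (hM : M.IsSymm) {z : ℂ} (hz : z.im ≠ 0)
    (j k : Fin n) :
    (((Az M z)⁻¹) j k).im
      = z.im * (∑ l, ((Az M z)⁻¹) j l * (starRingEnd ℂ) (((Az M z)⁻¹) k l)).re := by
  have hdet : IsUnit (Az M z).det := az_isUnit M hM hz
  have hdetH : IsUnit ((Az M z).conjTranspose).det := by
    rw [Matrix.det_conjTranspose]; exact hdet.star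
  have hRH : ((Az M z)⁻¹).conjTranspose = ((Az M z).conjTranspose)⁻¹ :=
    Matrix.conjTranspose_nonsing_inv _
  have h1 : (Az M z).conjTranspose - Az M z = (z - (starRingEnd ℂ) z) • 1 := by
    rw [az_conjT M hM]
    unfold Az
    rw [sub_smul]
    abel
  have key : (Az M z)⁻¹ - ((Az M z)⁻¹).conjTranspose
      = (z - (starRingEnd ℂ) z) • ((Az M z)⁻¹ * ((Az M z)⁻¹).conjTranspose) := by
    have h2 : (Az M z)⁻¹ * (((Az M z).conjTranspose - Az M z) * ((Az M z)⁻¹).conjTranspose)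
        = (Az M z)⁻¹ - ((Az M z)⁻¹).conjTranspose := by
      rw [sub_mul, mul_sub, hRH, Matrix.mul_nonsing_inv _ hdetH, mul_one,
        ← Matrix.mul_assoc, Matrix.nonsing_inv_mul _ hdet, Matrix.one_mul]
    rw [← h2, h1, Matrix.smul_mul, Matrix.one_mul, Matrix.mul_smul]
  have e := congrArg (fun B : Matrix (Fin n) (Fin n) ℂ => (B j k).im) key
  simp only [Matrix.sub_apply, Matrix.smul_apply, conjTranspose_apply, smul_eq_mul, RCLike.star_def] at e
  have hsym : ((Az M z)⁻¹) k j = ((Az M z)⁻¹) j k := R_symm M hM z j k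
  rw [hsym] at e
  set S := ((Az M z)⁻¹ * ((Az M z)⁻¹).conjTranspose) j k with hS
  have hSsum : S = ∑ l, ((Az M z)⁻¹) j l * (starRingEnd ℂ) (((Az M z)⁻¹) k l) := by
    rw [hS, Matrix.mul_apply]
    exact Finset.sum_congr rfl fun l _ => by rw [conjTranspose_apply]; rfl
  rw [← hSsum]
  have elhs : (((Az M z)⁻¹) j k - (starRingEnd ℂ) (((Az M z)⁻¹) j k)).im
      = 2 * (((Az M z)⁻¹) j k).im := by
    simp [Complex.sub_im, Complex.conj_im]; ring
  have erhs : ((z - (starRingEnd ℂ) z) * S).im = 2 * z.im * S.re := by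
    have ha : (z - (starRingEnd ℂ) z).re = 0 := by simp
    have hb : (z - (starRingEnd ℂ) z).im = 2 * z.im := by
      rw [Complex.sub_im, Complex.conj_im]; ring
    rw [Complex.mul_im, ha, hb]; ring
  rw [elhs, erhs] at e
  linarith

lemma diag_im (M : Matrix (Fin n) (Fin n) ℝ) (hM : M.IsSymm) {z : ℂ} (hz : z.im ≠ 0)
    (j : Fin n) :
    (((Az M z)⁻¹) j j).im = z.im * ∑ l, Complex.normSq (((Az M z)⁻¹) j l) := by
  rw [entry_im M hM hz j j]
  congr 1
  rw [Complex.re_sum]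
  exact Finset.sum_congr rfl fun l _ => by rw [Complex.mul_conj]; simp

lemma col_eq (M : Matrix (Fin n) (Fin n) ℝ) (hM : M.IsSymm) {z : ℂ} (hz : z.im ≠ 0)
    (j : Fin n) :
    (Az M z).mulVec (fun l => ((Az M z)⁻¹) l j) = Pi.single j 1 := by
  have h1 : (fun l => ((Az M z)⁻¹) l j) = (Az M z)⁻¹.mulVec (Pi.single j 1) := by
    rw [Matrix.mulVec_single]
    funext i; simp
  rw [h1, Matrix.mulVec_mulVec, Matrix.mul_nonsing_inv _ (az_isUnit M hM hz), Matrix.one_mulVec]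

lemma nsq_single (j : Fin n) : nsq (Pi.single j 1 : Fin n → ℂ) = 1 := by
  unfold nsq
  rw [Finset.sum_eq_single j]
  · simp
  · intro l _ hl; rw [Pi.single_apply]; simp [hl]
  · intro h; exact absurd (Finset.mem_univ j) h

lemma col_nsq_bound (M : Matrix (Fin n) (Fin n) ℝ) (hM : M.IsSymm) {z : ℂ} (hz : z.im ≠ 0)
    (j : Fin n) :
    z.im ^ 2 * nsq (fun l => ((Az M z)⁻¹) l j) ≤ 1 := by
  have := nsq_bound M hM z (col_eq M hM hz j)
  rwa [nsq_single] at this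

lemma row_col_sum (M : Matrix (Fin n) (Fin n) ℝ) (hM : M.IsSymm) (z : ℂ) (j : Fin n) :
    ∑ l, Complex.normSq (((Az M z)⁻¹) j l) = nsq (fun l => ((Az M z)⁻¹) l j) := by
  unfold nsq
  exact Finset.sum_congr rfl fun l _ => by simp only [R_symm M hM z j l]

lemma diag_nonneg (M : Matrix (Fin n) (Fin n) ℝ) (hM : M.IsSymm) {z : ℂ} (hz : 0 < z.im)
    (j : Fin n) : 0 ≤ (((Az M z)⁻¹) j j).im := by
  rw [diag_im M hM (ne_of_gt hz) j]
  exact mul_nonneg (le_of_lt hz) (Finset.sum_nonneg fun l _ => Complex.normSq_nonneg _)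

lemma diag_le (M : Matrix (Fin n) (Fin n) ℝ) (hM : M.IsSymm) {z : ℂ} (hz : 0 < z.im)
    (j : Fin n) : (((Az M z)⁻¹) j j).im ≤ 1 / z.im := by
  rw [diag_im M hM (ne_of_gt hz) j, row_col_sum M hM z j]
  have h := col_nsq_bound M hM (ne_of_gt hz) j
  rw [le_div_iff₀ hz]
  nlinarith [nsq_nonneg (fun l => ((Az M z)⁻¹) l j)]

lemma offdiag_le (M : Matrix (Fin n) (Fin n) ℝ) (hM : M.IsSymm) {z : ℂ} (hz : 0 < z.im)
    (j k : Fin n) :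
    |(((Az M z)⁻¹) j k).im|
      ≤ ((((Az M z)⁻¹) j j).im + (((Az M z)⁻¹) k k).im) / 2 := by
  set R := (Az M z)⁻¹ with hR
  have hjk := entry_im M hM (ne_of_gt hz) j k
  have hjj := diag_im M hM (ne_of_gt hz) j
  have hkk := diag_im M hM (ne_of_gt hz) k
  set S := ∑ l, R j l * (starRingEnd ℂ) (R k l) with hS
  set a := ∑ l, Complex.normSq (R j l) with ha
  set b := ∑ l, Complex.normSq (R k l) with hb
  have hcs : Complex.normSq S ≤ a * b := by
    have := cs (fun l => (starRingEnd ℂ) (R j l)) (fun l => (starRingEnd ℂ) (R k l))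
    simp only [Complex.conj_conj] at this
    have e1 : nsq (fun l => (starRingEnd ℂ) (R j l)) = a := by
      unfold nsq; exact Finset.sum_congr rfl fun l _ => Complex.normSq_conj _
    have e2 : nsq (fun l => (starRingEnd ℂ) (R k l)) = b := by
      unfold nsq; exact Finset.sum_congr rfl fun l _ => Complex.normSq_conj _
    rwa [e1, e2] at this
  have han : 0 ≤ a := Finset.sum_nonneg fun l _ => Complex.normSq_nonneg _
  have hbn : 0 ≤ b := Finset.sum_nonneg fun l _ => Complex.normSq_nonneg _
  have hre : S.re ^ 2 ≤ a * b := by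
    rw [Complex.normSq_apply] at hcs
    nlinarith [sq_nonneg S.im]
  have habs : |S.re| ≤ (a + b) / 2 := by
    have h1 : 0 ≤ |S.re| := abs_nonneg _
    nlinarith [sq_abs S.re, sq_nonneg (a - b), sq_nonneg (|S.re| - (a+b)/2)]
  rw [hjk, hjj, hkk, abs_mul, abs_of_pos hz]
  calc z.im * |S.re| ≤ z.im * ((a + b)/2) := mul_le_mul_of_nonneg_left habs (le_of_lt hz)
    _ = (z.im * a + z.im * b) / 2 := by ring

lemma nsq_smul (c : ℂ) (x : Fin n → ℂ) : nsq (c • x) = Complex.normSq c * nsq x := by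
  unfold nsq
  rw [Finset.mul_sum]
  exact Finset.sum_congr rfl fun i _ => by simp [Complex.normSq_mul]

lemma nsq_add_le (a b : Fin n → ℂ) {t : ℝ} (ht : 0 < t) :
    t * nsq (a + b) ≤ t * (1 + t) * nsq a + (1 + t) * nsq b := by
  unfold nsq
  rw [Finset.mul_sum, Finset.mul_sum, Finset.mul_sum, ← Finset.sum_add_distrib]
  refine Finset.sum_le_sum fun i _ => ?_
  have he : Complex.normSq (a i + b i)
      = Complex.normSq (a i) + Complex.normSq (b i) + 2 * (a i * (starRingEnd ℂ) (b i)).re :=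
    Complex.normSq_add _ _
  have h1 : (a i * (starRingEnd ℂ) (b i)).re ≤ ‖a i‖ * ‖b i‖ := by
    refine (Complex.re_le_norm _).trans ?_
    rw [show ‖a i * (starRingEnd ℂ) (b i)‖
        = ‖a i‖ * ‖(starRingEnd ℂ) (b i)‖ from norm_mul _ _,
      Complex.norm_conj]
  have h2 : Complex.normSq (a i) = ‖a i‖ ^ 2 := (Complex.sq_norm _).symm
  have h3 : Complex.normSq (b i) = ‖b i‖ ^ 2 := (Complex.sq_norm _).symm
  rw [Pi.add_apply, he, h2, h3]
  nlinarith [sq_nonneg (t * ‖a i‖ - ‖b i‖),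
    norm_nonneg (a i), norm_nonneg (b i)]

lemma diag_mono (M : Matrix (Fin n) (Fin n) ℝ) (hM : M.IsSymm) {u v v' : ℝ}
    (hv : 0 < v) (hvv : v ≤ v') (j : Fin n) :
    (((Az M ((u:ℂ) + v * Complex.I))⁻¹) j j).im
      ≤ (v' / v) * (((Az M ((u:ℂ) + v' * Complex.I))⁻¹) j j).im := by
  set z₁ : ℂ := (u:ℂ) + v * Complex.I with hz₁
  set z₂ : ℂ := (u:ℂ) + v' * Complex.I with hz₂
  have hv' : 0 < v' := lt_of_lt_of_le hv hvv
  have him₁ : z₁.im = v := by simp [hz₁]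
  have him₂ : z₂.im = v' := by simp [hz₂]
  have hne₁ : z₁.im ≠ 0 := by rw [him₁]; exact ne_of_gt hv
  have hne₂ : z₂.im ≠ 0 := by rw [him₂]; exact ne_of_gt hv'
  rcases eq_or_lt_of_le hvv with heq | hlt
  · subst heq
    rw [div_self (ne_of_gt hv), one_mul]
  -- strict case
  set R₁ := (Az M z₁)⁻¹ with hR₁
  set R₂ := (Az M z₂)⁻¹ with hR₂
  set y₁ : Fin n → ℂ := fun l => R₁ l j with hy₁
  set y₂ : Fin n → ℂ := fun l => R₂ l j with hy₂
  set w : Fin n → ℂ := R₁.mulVec y₂ with hw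
  set d : ℂ := z₂ - z₁ with hd
  have hAz12 : Az M z₁ = Az M z₂ + d • 1 := by
    unfold Az
    rw [hd, sub_smul]
    abel
  have hA1y2 : (Az M z₁).mulVec y₂ = Pi.single j 1 + d • y₂ := by
    rw [hAz12, Matrix.add_mulVec, Matrix.smul_mulVec, Matrix.one_mulVec]
    rw [col_eq M hM hne₂ j]
  have hR1A1 : ∀ x : Fin n → ℂ, R₁.mulVec ((Az M z₁).mulVec x) = x := by
    intro x
    rw [Matrix.mulVec_mulVec, Matrix.nonsing_inv_mul _ (az_isUnit M hM hne₁), Matrix.one_mulVec]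
  have hR1single : R₁.mulVec (Pi.single j 1) = y₁ := by
    rw [Matrix.mulVec_single]
    funext i; simp [hy₁]
  have hy2eq : y₂ = y₁ + d • w := by
    have := hR1A1 y₂
    rw [hA1y2, Matrix.mulVec_add, hR1single, Matrix.mulVec_smul] at this
    exact this.symm
  have hy1eq : y₁ = y₂ + (-(d • w)) := by rw [hy2eq]; funext i; simp
  have hA1w : (Az M z₁).mulVec w = y₂ := by
    rw [hw, Matrix.mulVec_mulVec, Matrix.mul_nonsing_inv _ (az_isUnit M hM hne₁),
      Matrix.one_mulVec]
  have hwb : v ^ 2 * nsq w ≤ nsq y₂ := by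
    have := nsq_bound M hM z₁ hA1w
    rwa [him₁] at this
  have hdns : Complex.normSq d = (v' - v) ^ 2 := by
    have : d = ((v' - v : ℝ) : ℂ) * Complex.I := by
      rw [hd, hz₁, hz₂]; push_cast; ring
    rw [this, Complex.normSq_mul, Complex.normSq_I, Complex.normSq_ofReal]; ring
  set t : ℝ := (v' - v) / v with htdef
  have ht : 0 < t := div_pos (by linarith) hv
  have htv : t * v = v' - v := by
    rw [htdef]; field_simp
  have H := nsq_add_le y₂ (-(d • w)) ht
  rw [← hy1eq] at H
  have hnegsmul : nsq (-(d • w)) = (v' - v) ^ 2 * nsq w := by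
    have h1 : -(d • w) = (-d) • w := by funext i; simp
    rw [h1, nsq_smul, Complex.normSq_neg, hdns]
  rw [hnegsmul] at H
  -- conclude v^2 * nsq y₁ ≤ v'^2 * nsq y₂
  have hq : 0 < v' - v := by linarith
  have hmain : v ^ 2 * nsq y₁ ≤ v' ^ 2 * nsq y₂ := by
    have H3 := mul_le_mul_of_nonneg_left H (le_of_lt (pow_pos hv 3))
    have c1 : v ^ 3 * (t * nsq y₁) = (v' - v) * (v ^ 2 * nsq y₁) := by
      rw [htdef]; field_simp
    have c2 : v ^ 3 * (t * (1 + t) * nsq y₂ + (1 + t) * ((v' - v) ^ 2 * nsq w))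
        = (v' - v) * v * v' * nsq y₂ + v' * (v' - v) ^ 2 * (v ^ 2 * nsq w) := by
      rw [htdef]; field_simp; ring
    rw [c1, c2] at H3
    have H5 : v' * (v' - v) ^ 2 * (v ^ 2 * nsq w) ≤ v' * (v' - v) ^ 2 * nsq y₂ :=
      mul_le_mul_of_nonneg_left hwb (by positivity)
    nlinarith [H3, H5, hq]
  have e₁ : (R₁ j j).im = v * nsq y₁ := by
    rw [hR₁, diag_im M hM hne₁ j, him₁, row_col_sum M hM z₁ j]
  have e₂ : (R₂ j j).im = v' * nsq y₂ := by
    rw [hR₂, diag_im M hM hne₂ j, him₂, row_col_sum M hM z₂ j]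
  rw [e₁, e₂]
  rw [div_mul_eq_mul_div, le_div_iff₀ hv]
  nlinarith [hmain]

lemma entry_im_abs_le (M : Matrix (Fin n) (Fin n) ℝ) (hM : M.IsSymm) {z : ℂ} (hz : 0 < z.im)
    (j k : Fin n) : |(((Az M z)⁻¹) j k).im| ≤ 1 / z.im := by
  refine (offdiag_le M hM hz j k).trans ?_
  have h1 := diag_le M hM hz j
  have h2 := diag_le M hM hz k
  linarith

/-- facts about a root of `1 + z s + s² = 0` with positive imaginary part. -/
lemma root_facts {u v : ℝ} (hv : 0 < v) {s : ℂ}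
    (heq : 1 + ((u:ℂ) + v * Complex.I) * s + s ^ 2 = 0) (hb : 0 < s.im) :
    0 < Complex.normSq s ∧ Complex.normSq s < 1 ∧
      s.im * (1 - Complex.normSq s) = v * Complex.normSq s ∧
      s.re * (1 + Complex.normSq s) = -u * Complex.normSq s := by
  set z : ℂ := (u:ℂ) + v * Complex.I with hz
  have hzre : z.re = u := by simp [hz]
  have hzim : z.im = v := by simp [hz]
  set m := Complex.normSq s with hm
  have hsne : s ≠ 0 := fun hc => by simp [hc] at hb
  have hmpos : 0 < m := Complex.normSq_pos.2 hsne
  have heq2 : (starRingEnd ℂ) s + z * (m:ℂ) + (m:ℂ) * s = 0 := by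
    have hconj : (starRingEnd ℂ) s * s = (m:ℂ) := by
      rw [hm, mul_comm, Complex.mul_conj]
    linear_combination (starRingEnd ℂ) s * heq - (z + s) * hconj
  have him := congrArg Complex.im heq2
  have hre := congrArg Complex.re heq2
  simp only [Complex.add_im, Complex.add_re, Complex.conj_im, Complex.conj_re,
    Complex.mul_im, Complex.mul_re, Complex.ofReal_re, Complex.ofReal_im,
    Complex.zero_im, Complex.zero_re, hzre, hzim] at him hre
  -- him : -s.im + (u * 0 + v * m) + (m * s.im + 0 * s.re) = 0 (roughly)
  have hEim : s.im * (1 - m) = v * m := by linear_combination -him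
  have hEre : s.re * (1 + m) = -u * m := by linear_combination hre
  have hmlt : m < 1 := by
    by_contra hc
    push_neg at hc
    have h1 : s.im * (1 - m) ≤ 0 := mul_nonpos_of_nonneg_of_nonpos (le_of_lt hb) (by linarith)
    nlinarith [mul_pos hv hmpos]
  exact ⟨hmpos, hmlt, hEim, hEre⟩

lemma root_master {u v : ℝ} (hv : 0 < v) {s : ℂ}
    (heq : 1 + ((u:ℂ) + v * Complex.I) * s + s ^ 2 = 0) (hb : 0 < s.im) :
    (1 - Complex.normSq s) ^ 2 * (1 + Complex.normSq s) ^ 2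
      = u ^ 2 * Complex.normSq s * (1 - Complex.normSq s) ^ 2
        + v ^ 2 * Complex.normSq s * (1 + Complex.normSq s) ^ 2 := by
  obtain ⟨hmpos, hmlt, hEim, hEre⟩ := root_facts hv heq hb
  set m := Complex.normSq s with hm
  have hab : s.re ^ 2 + s.im ^ 2 = m := by
    rw [hm, Complex.normSq_apply]; ring
  have e1 : s.re ^ 2 * (1 + m) ^ 2 = u ^ 2 * m ^ 2 := by
    linear_combination (s.re * (1 + m) - u * m) * hEre
  have e2 : s.im ^ 2 * (1 - m) ^ 2 = v ^ 2 * m ^ 2 := by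
    linear_combination (s.im * (1 - m) + v * m) * hEim
  have key : m * ((1 - m) ^ 2 * (1 + m) ^ 2)
      = m * (u ^ 2 * m * (1 - m) ^ 2 + v ^ 2 * m * (1 + m) ^ 2) := by
    linear_combination (-((1 - m) ^ 2 * (1 + m) ^ 2)) * hab + (1 - m) ^ 2 * e1
      + (1 + m) ^ 2 * e2
  exact mul_left_cancel₀ (ne_of_gt hmpos) key

/-- monotonicity of the semicircle imaginary part. -/
lemma sc_mono {u v v' : ℝ} (hv : 0 < v) (hvv : v ≤ v') {s₁ s₂ : ℂ}
    (h₁ : 1 + ((u:ℂ) + v * Complex.I) * s₁ + s₁ ^ 2 = 0) (hb₁ : 0 < s₁.im)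
    (h₂ : 1 + ((u:ℂ) + v' * Complex.I) * s₂ + s₂ ^ 2 = 0) (hb₂ : 0 < s₂.im) :
    s₂.im ≤ (v' / v) * s₁.im := by
  have hv' : 0 < v' := lt_of_lt_of_le hv hvv
  obtain ⟨hm₁, hm₁lt, hE₁, _⟩ := root_facts hv h₁ hb₁
  obtain ⟨hm₂, hm₂lt, hE₂, _⟩ := root_facts hv' h₂ hb₂
  have hM₁ := root_master hv h₁ hb₁
  have hM₂ := root_master hv' h₂ hb₂
  set m₁ := Complex.normSq s₁
  set m₂ := Complex.normSq s₂
  -- m₂ ≤ m₁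
  have hmono : m₂ ≤ m₁ := by
    by_contra hc
    push_neg at hc
    -- 1 = u²m₁/(1+m₁)² + v²m₁/(1-m₁)², similarly for 2; contradiction
    have d1 : u ^ 2 * m₁ * (1 + m₂) ^ 2 * ((1 - m₁) ^ 2 * (1 - m₂) ^ 2)
        ≤ u ^ 2 * m₂ * (1 + m₁) ^ 2 * ((1 - m₁) ^ 2 * (1 - m₂) ^ 2) := by
      have hb : 0 ≤ (m₂ - m₁) * (1 - m₁ * m₂) := by
        apply mul_nonneg (by linarith)
        nlinarith [hm₁, hm₂, hm₁lt, hm₂lt]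
      have core : m₁ * (1 + m₂) ^ 2 ≤ m₂ * (1 + m₁) ^ 2 := by nlinarith [hb]
      have cn : (0:ℝ) ≤ (1 - m₁) ^ 2 * (1 - m₂) ^ 2 := by positivity
      linarith [mul_le_mul_of_nonneg_right
        (mul_le_mul_of_nonneg_left core (sq_nonneg u)) cn]
    have d2 : v ^ 2 * m₁ * (1 - m₂) ^ 2 * ((1 + m₁) ^ 2 * (1 + m₂) ^ 2)
        < v' ^ 2 * m₂ * (1 - m₁) ^ 2 * ((1 + m₁) ^ 2 * (1 + m₂) ^ 2) := by
      have hvsq : v ^ 2 ≤ v' ^ 2 := by nlinarith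
      have hstrict : m₁ * (1 - m₂) ^ 2 < m₂ * (1 - m₁) ^ 2 := by
        have h1m : 0 < 1 - m₁ * m₂ := by nlinarith [hm₁, hm₂, hm₁lt, hm₂lt]
        have hh := mul_pos (sub_pos.2 hc) h1m
        nlinarith [hh]
      have h1p : (0:ℝ) < (1 + m₁) ^ 2 * (1 + m₂) ^ 2 := by positivity
      have hv2 : 0 < v ^ 2 := by positivity
      have : v ^ 2 * (m₁ * (1 - m₂) ^ 2) < v' ^ 2 * (m₂ * (1 - m₁) ^ 2) := by
        calc v ^ 2 * (m₁ * (1 - m₂) ^ 2) < v ^ 2 * (m₂ * (1 - m₁) ^ 2) := by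
              exact (mul_lt_mul_iff_right₀ hv2).2 hstrict
          _ ≤ v' ^ 2 * (m₂ * (1 - m₁) ^ 2) := by
              apply mul_le_mul_of_nonneg_right hvsq
              positivity
      linarith [mul_lt_mul_of_pos_right this h1p]
    -- combine with masters
    have E1 : u ^ 2 * m₁ * (1 + m₂) ^ 2 * ((1 - m₁) ^ 2 * (1 - m₂) ^ 2)
        + v ^ 2 * m₁ * (1 - m₂) ^ 2 * ((1 + m₁) ^ 2 * (1 + m₂) ^ 2)
        = (1 - m₁) ^ 2 * (1 + m₁) ^ 2 * (1 - m₂) ^ 2 * (1 + m₂) ^ 2 := by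
      linear_combination (-((1 - m₂) ^ 2 * (1 + m₂) ^ 2)) * hM₁
    have E2 : u ^ 2 * m₂ * (1 + m₁) ^ 2 * ((1 - m₁) ^ 2 * (1 - m₂) ^ 2)
        + v' ^ 2 * m₂ * (1 - m₁) ^ 2 * ((1 + m₁) ^ 2 * (1 + m₂) ^ 2)
        = (1 - m₁) ^ 2 * (1 + m₁) ^ 2 * (1 - m₂) ^ 2 * (1 + m₂) ^ 2 := by
      linear_combination (-((1 - m₁) ^ 2 * (1 + m₁) ^ 2)) * hM₂
    linarith [E1, E2, d1, d2]
  -- conclude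
  have hden₁ : 0 < 1 - m₁ := by linarith
  have hden₂ : 0 < 1 - m₂ := by linarith
  rw [div_mul_eq_mul_div, le_div_iff₀ hv]
  -- goal : s₂.im * v ≤ v' * s₁.im
  have key : s₂.im * v * ((1 - m₁) * (1 - m₂)) ≤ v' * s₁.im * ((1 - m₁) * (1 - m₂)) := by
    have g1 : s₂.im * v * ((1 - m₁) * (1 - m₂)) = v * (1 - m₁) * (v' * m₂) := by
      linear_combination (v * (1 - m₁)) * hE₂
    have g2 : v' * s₁.im * ((1 - m₁) * (1 - m₂)) = v' * (1 - m₂) * (v * m₁) := by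
      linear_combination (v' * (1 - m₂)) * hE₁
    rw [g1, g2]
    nlinarith [mul_nonneg (le_of_lt (mul_pos hv hv')) (sub_nonneg.2 hmono)]
  have hpos : 0 < (1 - m₁) * (1 - m₂) := mul_pos hden₁ hden₂
  exact le_of_mul_le_mul_right key hpos

section meas
variable {Ω : Type} [MeasurableSpace Ω]

lemma measurable_det_comp (f : Ω → Matrix (Fin n) (Fin n) ℂ)
    (hf : ∀ i j, Measurable fun ω => f ω i j) : Measurable fun ω => (f ω).det := by
  simp_rw [Matrix.det_apply, Units.smul_def, zsmul_eq_mul]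
  refine Finset.measurable_sum _ fun σ _ => ?_
  exact measurable_const.mul (Finset.measurable_prod _ fun i _ => hf (σ i) i)

lemma measurable_az_entry (W : Ω → Matrix (Fin n) (Fin n) ℝ)
    (hW : ∀ i j, Measurable fun ω => W ω i j) (z : ℂ) (i l : Fin n) :
    Measurable fun ω => Az (W ω) z i l := by
  have : (fun ω => Az (W ω) z i l)
      = fun ω => ((W ω i l : ℂ)) - z * ((1 : Matrix (Fin n) (Fin n) ℂ) i l) := rfl
  rw [this]
  exact ((Complex.measurable_ofReal.comp (hW i l)).sub measurable_const)

lemma measurable_resolv_entry (W : Ω → Matrix (Fin n) (Fin n) ℝ)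
    (hW : ∀ i j, Measurable fun ω => W ω i j) (z : ℂ) (j k : Fin n) :
    Measurable fun ω => ((Az (W ω) z)⁻¹) j k := by
  have hAz := measurable_az_entry W hW z
  have hdet : Measurable fun ω => (Az (W ω) z).det := measurable_det_comp _ hAz
  have hadj : Measurable fun ω => (Az (W ω) z).adjugate j k := by
    simp_rw [Matrix.adjugate_apply]
    refine measurable_det_comp _ fun i l => ?_
    simp_rw [Matrix.updateRow_apply]
    by_cases h : i = k
    · simp only [h, if_true]; exact measurable_const
    · simp only [h, if_false]; exact hAz i l
  have : (fun ω => ((Az (W ω) z)⁻¹) j k)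
      = fun ω => ((Az (W ω) z).det)⁻¹ * (Az (W ω) z).adjugate j k := by
    funext ω
    rw [Matrix.inv_def, Matrix.smul_apply, Ring.inverse_eq_inv, smul_eq_mul]
  rw [this]
  exact (hdet.inv).mul hadj

end meas

end DescentAux

open MeasureTheory ProbabilityTheory

/-- Lemma 3.6 (descent lemma for imaginary parts): bounds
`E (Im R_jj)^p ≤ H₀^p log^p n Ψ^p` at scale `vt` propagate down to scale `vt/s₀`. -/
theorem descent_lemma_imag
    {Ω : Type} [MeasurableSpace Ω] (P : Measure Ω) [IsProbabilityMeasure P]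
    (n : ℕ) (W : Ω → Matrix (Fin n) (Fin n) ℝ)
    (_hmeas : ∀ i j, Measurable fun ω => W ω i j)
    (_hsymm : ∀ ω, (W ω).IsSymm)
    (s : ℂ → ℂ)
    (_hs : ∀ z : ℂ, 0 < z.im → 1 + z * s z + s z ^ 2 = 0 ∧ 0 < (s z).im)
    (u H₀ A₁ κ vt p : ℝ) (hH₀ : 0 < H₀) (hA₁ : 0 < A₁) (hκ : 0 < κ) (hvt : 0 < vt)
    (hp : 1 ≤ p)
    (hyp : ∀ v' : ℝ, vt ≤ v' → p ≤ A₁ * (n * v') ^ κ →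
      ∀ j : Fin n,
        (∫ ω, ((resolv (W ω) (u + v' * Complex.I)) j j).im ^ p ∂P)
          ≤ H₀ ^ p * Real.log n ^ p
            * ((s (u + v' * Complex.I)).im + p / (n * v')) ^ p) :
    ∀ s₀ v : ℝ, 1 ≤ s₀ → vt / s₀ ≤ v → p ≤ A₁ * (n * (s₀ * v)) ^ κ →
      ∀ j k : Fin n,
        (∫ ω, ((resolv (W ω) (u + v * Complex.I)) j k).im ^ p ∂P)
          ≤ s₀ ^ (2 * p) * H₀ ^ p * Real.log n ^ p
            * ((s (u + v * Complex.I)).im + p / (n * v)) ^ p := by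
  intro s₀ v hs₀ hvge hpk j k
  have hs₀pos : (0:ℝ) < s₀ := lt_of_lt_of_le one_pos hs₀
  have hv0 : 0 < v := lt_of_lt_of_le (div_pos hvt hs₀pos) hvge
  have hp0 : (0:ℝ) ≤ p := le_trans zero_le_one hp
  set v' : ℝ := s₀ * v with hv'def
  have hv'0 : 0 < v' := mul_pos hs₀pos hv0
  have hvv' : v ≤ v' := by nlinarith
  set z₁ : ℂ := (u:ℂ) + v * Complex.I with hz₁
  set z₂ : ℂ := (u:ℂ) + v' * Complex.I with hz₂
  have him₁ : z₁.im = v := by simp [hz₁]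
  have him₂ : z₂.im = v' := by simp [hz₂]
  have hn : 1 ≤ (n:ℝ) := by
    have hne : n ≠ 0 := fun h => (h ▸ j).elim0
    exact_mod_cast Nat.one_le_iff_ne_zero.2 hne
  have hn0 : 0 < (n:ℝ) := lt_of_lt_of_le one_pos hn
  -- semicircle facts
  obtain ⟨hq₁, hsim₁⟩ := _hs z₁ (by rw [him₁]; exact hv0)
  obtain ⟨hq₂, hsim₂⟩ := _hs z₂ (by rw [him₂]; exact hv'0)
  have hsc : (s z₂).im ≤ s₀ * (s z₁).im := by
    have hq₁' : 1 + ((u:ℂ) + v * Complex.I) * s z₁ + (s z₁) ^ 2 = 0 := by rw [← hz₁]; exact hq₁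
    have hq₂' : 1 + ((u:ℂ) + v' * Complex.I) * s z₂ + (s z₂) ^ 2 = 0 := by rw [← hz₂]; exact hq₂
    have h := DescentAux.sc_mono hv0 hvv' hq₁' hsim₁ hq₂' hsim₂
    have hr : v' / v = s₀ := by rw [hv'def]; field_simp
    rwa [hr] at h
  -- deterministic bounds
  have hres : ∀ (B : Matrix (Fin n) (Fin n) ℝ) (z : ℂ), resolv B z = (DescentAux.Az B z)⁻¹ :=
    fun _ _ => rfl
  set f : Ω → ℝ := fun ω => ((resolv (W ω) z₁) j k).im with hf
  set g : Fin n → Ω → ℝ := fun l ω => ((resolv (W ω) z₂) l l).im with hg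
  have hga : ∀ l ω, 0 ≤ g l ω := fun l ω => by
    exact DescentAux.diag_nonneg (W ω) (_hsymm ω) (z := z₂) (by rw [him₂]; exact hv'0) l
  have hgb : ∀ l ω, g l ω ≤ 1 / v' := fun l ω => by
    have h := DescentAux.diag_le (W ω) (_hsymm ω) (z := z₂) (by rw [him₂]; exact hv'0) l
    rw [him₂] at h
    exact h
  have hfabs : ∀ ω, |f ω| ≤ 1 / v := fun ω => by
    have h := DescentAux.entry_im_abs_le (W ω) (_hsymm ω) (z := z₁) (by rw [him₁]; exact hv0) j k
    rw [him₁] at h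
    exact h
  have hd1nn : ∀ l ω, 0 ≤ ((resolv (W ω) z₁) l l).im := fun l ω => by
    exact DescentAux.diag_nonneg (W ω) (_hsymm ω) (z := z₁) (by rw [him₁]; exact hv0) l
  have hmono : ∀ l ω, ((resolv (W ω) z₁) l l).im ≤ s₀ * g l ω := fun l ω => by
    have h := DescentAux.diag_mono (W ω) (_hsymm ω) (u := u) hv0 hvv' l
    have hr : v' / v = s₀ := by rw [hv'def]; field_simp
    rw [hr] at h
    exact h
  have hoff : ∀ ω, |f ω| ≤ (((resolv (W ω) z₁) j j).im + ((resolv (W ω) z₁) k k).im) / 2 :=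
    fun ω => by
      exact DescentAux.offdiag_le (W ω) (_hsymm ω) (z := z₁) (by rw [him₁]; exact hv0) j k
  -- pointwise power bound
  have hpoint : ∀ ω, f ω ^ p ≤ s₀ ^ p * ((g j ω ^ p + g k ω ^ p) / 2) := by
    intro ω
    have ha : 0 ≤ g j ω := hga j ω
    have hb : 0 ≤ g k ω := hga k ω
    have h1 : f ω ^ p ≤ |f ω| ^ p :=
      le_trans (le_abs_self _) (Real.abs_rpow_le_abs_rpow (f ω) p)
    have h2 : |f ω| ≤ (s₀ * g j ω + s₀ * g k ω) / 2 := by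
      refine (hoff ω).trans ?_
      have h3 := hmono j ω
      have h4 := hmono k ω
      linarith
    have h3 : |f ω| ^ p ≤ ((s₀ * g j ω + s₀ * g k ω) / 2) ^ p :=
      Real.rpow_le_rpow (abs_nonneg _) h2 hp0
    have h5 : ((g j ω + g k ω) / 2) ^ p ≤ (g j ω ^ p + g k ω ^ p) / 2 := by
      have hcv := (convexOn_rpow hp).2 (Set.mem_Ici.2 ha) (Set.mem_Ici.2 hb)
        (by norm_num : (0:ℝ) ≤ 1/2) (by norm_num : (0:ℝ) ≤ 1/2)
        (by norm_num : (1:ℝ)/2 + 1/2 = 1)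
      simp only [smul_eq_mul] at hcv
      calc ((g j ω + g k ω) / 2) ^ p = (1/2 * g j ω + 1/2 * g k ω) ^ p := by
            rw [show (g j ω + g k ω) / 2 = 1/2 * g j ω + 1/2 * g k ω by ring]
        _ ≤ 1/2 * g j ω ^ p + 1/2 * g k ω ^ p := hcv
        _ = (g j ω ^ p + g k ω ^ p) / 2 := by ring
    calc f ω ^ p ≤ ((s₀ * g j ω + s₀ * g k ω) / 2) ^ p := h1.trans h3
      _ = (s₀ * ((g j ω + g k ω) / 2)) ^ p := by
            rw [show (s₀ * g j ω + s₀ * g k ω) / 2 = s₀ * ((g j ω + g k ω) / 2) by ring]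
      _ = s₀ ^ p * ((g j ω + g k ω) / 2) ^ p :=
            Real.mul_rpow (le_of_lt hs₀pos) (by positivity)
      _ ≤ s₀ ^ p * ((g j ω ^ p + g k ω ^ p) / 2) :=
            mul_le_mul_of_nonneg_left h5 (Real.rpow_nonneg (le_of_lt hs₀pos) p)
  -- measurability and integrability
  have hfm : Measurable f :=
    Complex.measurable_im.comp (DescentAux.measurable_resolv_entry W _hmeas z₁ j k)
  have hgm : ∀ l, Measurable (g l) := fun l =>
    Complex.measurable_im.comp (DescentAux.measurable_resolv_entry W _hmeas z₂ l l)
  have hint_f : Integrable (fun ω => f ω ^ p) P := by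
    refine (integrable_const ((1/v) ^ p)).mono'
      ((hfm.pow measurable_const).aestronglyMeasurable) (ae_of_all _ fun ω => ?_)
    rw [Real.norm_eq_abs]
    exact (Real.abs_rpow_le_abs_rpow (f ω) p).trans
      (Real.rpow_le_rpow (abs_nonneg _) (hfabs ω) hp0)
  have hint_g : ∀ l, Integrable (fun ω => g l ω ^ p) P := fun l => by
    refine (integrable_const ((1/v') ^ p)).mono'
      (((hgm l).pow measurable_const).aestronglyMeasurable) (ae_of_all _ fun ω => ?_)
    rw [Real.norm_eq_abs]
    refine (Real.abs_rpow_le_abs_rpow (g l ω) p).trans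
      (Real.rpow_le_rpow (abs_nonneg _) ?_ hp0)
    rw [abs_of_nonneg (hga l ω)]
    exact hgb l ω
  have hint_rhs : Integrable (fun ω => s₀ ^ p * ((g j ω ^ p + g k ω ^ p) / 2)) P :=
    ((((hint_g j).add (hint_g k)).div_const 2).const_mul _)
  have hI : (∫ ω, f ω ^ p ∂P) ≤ ∫ ω, s₀ ^ p * ((g j ω ^ p + g k ω ^ p) / 2) ∂P :=
    integral_mono hint_f hint_rhs hpoint
  -- compute the RHS integral
  have hIrhs : (∫ ω, s₀ ^ p * ((g j ω ^ p + g k ω ^ p) / 2) ∂P)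
      = s₀ ^ p * (((∫ ω, g j ω ^ p ∂P) + (∫ ω, g k ω ^ p ∂P)) / 2) := by
    have e : (fun ω => s₀ ^ p * ((g j ω ^ p + g k ω ^ p) / 2))
        = fun ω => (s₀ ^ p / 2) * (g j ω ^ p + g k ω ^ p) := funext fun ω => by ring
    rw [e, integral_const_mul, integral_add (hint_g j) (hint_g k)]
    ring
  -- apply the hypothesis at scale v'
  have hvtle : vt ≤ v' := by
    have := (div_le_iff₀ hs₀pos).mp hvge
    rw [hv'def]; linarith [mul_comm v s₀]
  have hB : ∀ l : Fin n, (∫ ω, g l ω ^ p ∂P)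
      ≤ H₀ ^ p * Real.log n ^ p * ((s z₂).im + p / (n * v')) ^ p := fun l => by
    exact hyp v' hvtle hpk l
  -- Ψ comparison
  have hΨ₂nn : 0 ≤ (s z₂).im + p / (n * v') := by positivity
  have hΨ : (s z₂).im + p / (n * v') ≤ s₀ * ((s z₁).im + p / (n * v)) := by
    have hfrac : p / (n * v') ≤ p / (n * v) := by
      apply div_le_div_of_nonneg_left hp0 (by positivity)
      have : (n:ℝ) * v ≤ n * v' := by nlinarith
      exact this
    have hfrac2 : p / (n * v) ≤ s₀ * (p / (n * v)) :=
      le_mul_of_one_le_left (by positivity) hs₀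
    nlinarith [hsc]
  have hlogn : 0 ≤ Real.log n := Real.log_nonneg hn
  have hΨp : ((s z₂).im + p / (n * v')) ^ p ≤ s₀ ^ p * ((s z₁).im + p / (n * v)) ^ p := by
    rw [← Real.mul_rpow (le_of_lt hs₀pos) (by positivity)]
    exact Real.rpow_le_rpow hΨ₂nn hΨ hp0
  have hcoef : (0:ℝ) ≤ H₀ ^ p * Real.log n ^ p :=
    mul_nonneg (Real.rpow_nonneg (le_of_lt hH₀) p) (Real.rpow_nonneg hlogn p)
  -- final chain
  have final : (∫ ω, f ω ^ p ∂P)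
      ≤ s₀ ^ p * (s₀ ^ p * (H₀ ^ p * Real.log n ^ p * ((s z₁).im + p / (n * v)) ^ p)) := by
    have step1 : (∫ ω, f ω ^ p ∂P)
        ≤ s₀ ^ p * (H₀ ^ p * Real.log n ^ p * ((s z₂).im + p / (n * v')) ^ p) := by
      rw [hIrhs] at hI
      refine hI.trans ?_
      apply mul_le_mul_of_nonneg_left _ (Real.rpow_nonneg (le_of_lt hs₀pos) p)
      have h1 := hB j
      have h2 := hB k
      linarith
    refine step1.trans ?_
    apply mul_le_mul_of_nonneg_left _ (Real.rpow_nonneg (le_of_lt hs₀pos) p)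
    calc H₀ ^ p * Real.log n ^ p * ((s z₂).im + p / (n * v')) ^ p
        ≤ H₀ ^ p * Real.log n ^ p * (s₀ ^ p * ((s z₁).im + p / (n * v)) ^ p) :=
          mul_le_mul_of_nonneg_left hΨp hcoef
      _ = s₀ ^ p * (H₀ ^ p * Real.log n ^ p * ((s z₁).im + p / (n * v)) ^ p) := by ring
  have hrw : s₀ ^ (2 * p) = s₀ ^ p * s₀ ^ p := by
    rw [show (2:ℝ) * p = p + p by ring, Real.rpow_add hs₀pos]
  calc (∫ ω, ((resolv (W ω) z₁) j k).im ^ p ∂P) = ∫ ω, f ω ^ p ∂P := rfl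
    _ ≤ s₀ ^ p * (s₀ ^ p * (H₀ ^ p * Real.log n ^ p * ((s z₁).im + p / (n * v)) ^ p)) := final
    _ = s₀ ^ (2 * p) * H₀ ^ p * Real.log n ^ p * ((s z₁).im + p / (n * v)) ^ p := by
          rw [hrw]; ring
end
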